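/- arXiv:1012.4097 — 2 statements merged into one kernel-verified Lean document; each statement's English description precedes it below -/
import Mathlib

section
/- Let G be any n-lift of a d-regular graph H on vertex set [h], and let Y⁺ = {y ∈ ℝ^{V(G)} : ‖y‖₂² ≤ 10nh and every entry of y lies in {0} ∪ {2^i : i ∈ ℕ, i ≥ 1}}. Then nh·λ*(G) ≤ 12 · sup_{y∈Y⁺} |⟨y,y⟩_N|. -/
open scoped BigOperators
open scoped Classical

namespace RandomLifts

noncomputable section

/-- Probability of an event under the uniform measure on a finite type. -/
def unifProb {Ω : Type*} [Fintype Ω] (p : Ω → Prop) : ℝ :=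
  letI := Classical.decPred p
  ((Finset.univ.filter p).card : ℝ) / (Fintype.card Ω : ℝ)

/-- The sample space of a random `n`-lift of a graph on `Fin h`: an
independent, uniformly random permutation for each (ordered) pair of fibres
(only the permutations attached to pairs `i < i'` with `i ~ i'` are used). -/
abbrev LiftSpace (h n : ℕ) := Fin h → Fin h → Equiv.Perm (Fin n)

/-- The `n`-lift of `H` determined by the matchings `ω`. -/
def liftGraph {h n : ℕ} (H : SimpleGraph (Fin h)) (ω : LiftSpace h n) :
    SimpleGraph (Fin h × Fin n) where
  Adj u v := H.Adj u.1 v.1 ∧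
    ((u.1 < v.1 ∧ v.2 = ω u.1 v.1 u.2) ∨ (v.1 < u.1 ∧ u.2 = ω v.1 u.1 v.2))
  symm := by
    constructor
    intro u v huv
    exact ⟨huv.1.symm, huv.2.symm⟩
  loopless := by
    constructor
    intro u hu
    exact H.irrefl hu.1

/-- The adjacency matrix of a graph, with real entries. -/
def adjMat {V : Type*} (G : SimpleGraph V) : Matrix V V ℝ :=
  fun u v => if G.Adj u v then 1 else 0

/-- The largest eigenvalue of (the adjacency matrix of) a graph on a finite
vertex set. -/
def lambdaMax {V : Type*} [Fintype V] (G : SimpleGraph V) : ℝ :=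
  sSup {μ : ℝ | ∃ x : V → ℝ, x ≠ 0 ∧ (adjMat G).mulVec x = μ • x}

/-- `λ*(G)`: the largest absolute value of a *new* eigenvalue of a lift,
i.e. of an eigenvalue admitting an eigenvector balanced on every fibre. -/
def lambdaStar {h n : ℕ} (G : SimpleGraph (Fin h × Fin n)) : ℝ :=
  sSup {r : ℝ | ∃ (μ : ℝ) (x : Fin h × Fin n → ℝ), x ≠ 0 ∧
    (adjMat G).mulVec x = μ • x ∧ (∀ i : Fin h, ∑ j : Fin n, x (i, j) = 0) ∧ r = |μ|}

/-- The matrix `M̄` of edge probabilities. -/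
def Mbar (h n : ℕ) (H : SimpleGraph (Fin h)) :
    Matrix (Fin h × Fin n) (Fin h × Fin n) ℝ :=
  fun u v => if H.Adj u.1 v.1 then 1 / (n : ℝ) else 0

/-- `N = M − M̄`. -/
def Nmat {h n : ℕ} (H : SimpleGraph (Fin h)) (G : SimpleGraph (Fin h × Fin n)) :
    Matrix (Fin h × Fin n) (Fin h × Fin n) ℝ :=
  adjMat G - Mbar h n H

/-- `⟨x,x⟩_A`. -/
def quadForm {V : Type*} [Fintype V] (A : Matrix V V ℝ) (x : V → ℝ) : ℝ :=
  ∑ u, ∑ v, x u * A u v * x v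

/-- `⟨x,x⟩_{A,E}`: the quadratic form restricted to pairs of entries lying in
`E ⊆ ℝ²`. -/
def quadFormOn {V : Type*} [Fintype V] (A : Matrix V V ℝ) (E : Set (ℝ × ℝ))
    (x : V → ℝ) : ℝ :=
  ∑ u, ∑ v, if (x u, x v) ∈ E then x u * A u v * x v else 0

/-- The set `E* = {(x₁,x₂) : x₁,x₂ > 0, d^{-1/2} < x₁/x₂ < d^{1/2}}`. -/
def Estar (d : ℕ) : Set (ℝ × ℝ) :=
  {p | 0 < p.1 ∧ 0 < p.2 ∧ (Real.sqrt d)⁻¹ < p.1 / p.2 ∧ p.1 / p.2 < Real.sqrt d}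

/-- `D^{>0} = {2^i/√(nh) : i ≥ 1}`. -/
def Dpos (n h : ℕ) : Set ℝ := {w | ∃ i : ℕ, 1 ≤ i ∧ w = 2 ^ i / Real.sqrt (n * h)}

/-- `D⁺ = {0} ∪ D^{>0}`. -/
def Dplus (n h : ℕ) : Set ℝ := insert 0 (Dpos n h)

/-- Membership in the set `Z` of dyadic test vectors. -/
def memZ (d h n : ℕ) (x : Fin h × Fin n → ℝ) : Prop :=
  (∑ v, x v ^ 2) ≤ 10 ∧ (∀ v, x v ∈ Dplus n h) ∧
    ∀ u v, x v ≠ 0 → x u ≤ (d : ℝ) * x v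

/-- A `Z`-type. -/
def IsZType (d h n : ℕ) (a : Fin h → ℝ → ℕ) : Prop :=
  (∀ i w, a i w ≠ 0 → w ∈ Dplus n h) ∧
  (∀ i, (∑ᶠ w : ℝ, a i w) ≤ n) ∧
  (∃ w₀ ∈ Dpos n h, ∀ i w, a i w ≠ 0 → w₀ ≤ w ∧ w ≤ w₀ * d) ∧
  ((∑ i : Fin h, ∑ᶠ w : ℝ, w ^ 2 * (a i w : ℝ)) ≤ 10)

/-- A pattern `(a,e)`. -/
def IsPattern (d h n : ℕ) (H : SimpleGraph (Fin h)) (a : Fin h → ℝ → ℕ)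
    (e : Fin h → ℝ → Fin h → ℝ → ℕ) : Prop :=
  IsZType d h n a ∧
  (∀ i w i' w', e i w i' w' = e i' w' i w) ∧
  (∀ i w i' w', e i w i' w' ≤ min (a i w) (a i' w')) ∧
  (∀ i w i' w', ¬H.Adj i i' → e i w i' w' = 0)

/-- The adjacency relation of the graph `Γ`. -/
def gammaAdj (d h n : ℕ) (H : SimpleGraph (Fin h)) (p q : Fin h × ℝ) : Prop :=
  H.Adj p.1 q.1 ∧ p.2 ∈ Dpos n h ∧ q.2 ∈ Dpos n h ∧
    (Real.sqrt d)⁻¹ < p.2 / q.2 ∧ p.2 / q.2 < Real.sqrt d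

/-- The summand `w w' (e_{i,w,i',w'} − a_{i,w}a_{i',w'}/n)` appearing in the
potency, for an ordered pair of `Γ`-adjacent vertices. -/
def potTerm (d h n : ℕ) (H : SimpleGraph (Fin h)) (a : Fin h → ℝ → ℕ)
    (e : Fin h → ℝ → Fin h → ℝ → ℕ) (p q : Fin h × ℝ) : ℝ :=
  if gammaAdj d h n H p q then
    p.2 * q.2 * ((e p.1 p.2 q.1 q.2 : ℝ) - (a p.1 p.2 : ℝ) * (a q.1 q.2 : ℝ) / n)
  else 0

/-- The potency `p(a,e)` of a pattern: the sum over unordered edges of `Γ`,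
realised as half of the sum over ordered pairs. -/
def potency (d h n : ℕ) (H : SimpleGraph (Fin h)) (a : Fin h → ℝ → ℕ)
    (e : Fin h → ℝ → Fin h → ℝ → ℕ) : ℝ :=
  |(1 / 2 : ℝ) * ∑ i : Fin h, ∑ i' : Fin h, ∑ᶠ w : ℝ, ∑ᶠ w' : ℝ,
      potTerm d h n H a e (i, w) (i', w')|

/-- The maximal potency `p̃(a,e)` over subsets of the edges of `Γ`. -/
def potencyTilde (d h n : ℕ) (H : SimpleGraph (Fin h)) (a : Fin h → ℝ → ℕ)
    (e : Fin h → ℝ → Fin h → ℝ → ℕ) : ℝ :=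
  sSup {r : ℝ | ∃ E : Set ((Fin h × ℝ) × (Fin h × ℝ)),
    (∀ pq ∈ E, gammaAdj d h n H pq.1 pq.2) ∧
    (∀ p q, (p, q) ∈ E → (q, p) ∈ E) ∧
    r = |(1 / 2 : ℝ) * ∑ i : Fin h, ∑ i' : Fin h, ∑ᶠ w : ℝ, ∑ᶠ w' : ℝ,
        (if ((i, w), (i', w')) ∈ E then potTerm d h n H a e (i, w) (i', w') else 0)|}

/-- The type of the sub-pattern `(a,e)_S`, first component. -/
def restrictA {h : ℕ} (S : Set (Fin h × ℝ)) (a : Fin h → ℝ → ℕ) :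
    Fin h → ℝ → ℕ :=
  fun i w => if (i, w) ∈ S then a i w else 0

/-- The edge counts of the sub-pattern `(a,e)_S`, second component. -/
def restrictE {h : ℕ} (S : Set (Fin h × ℝ)) (e : Fin h → ℝ → Fin h → ℝ → ℕ) :
    Fin h → ℝ → Fin h → ℝ → ℕ :=
  fun i w i' w' => if (i, w) ∈ S ∧ (i', w') ∈ S then e i w i' w' else 0

/-- `A_{i,w}(y) = {v ∈ V_i : y_v = w}`. -/
def Aset {h n : ℕ} (y : Fin h × Fin n → ℝ) (i : Fin h) (w : ℝ) :
    Finset (Fin h × Fin n) :=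
  letI := Classical.decPred fun v : Fin h × Fin n => v.1 = i ∧ y v = w
  Finset.univ.filter fun v => v.1 = i ∧ y v = w

/-- The number of edges of `G` between the sets `A` and `B`. -/
def edgeCount {h n : ℕ} (G : SimpleGraph (Fin h × Fin n))
    (A B : Finset (Fin h × Fin n)) : ℕ :=
  letI := Classical.decPred fun pq : (Fin h × Fin n) × (Fin h × Fin n) => G.Adj pq.1 pq.2
  ((A ×ˢ B).filter fun pq => G.Adj pq.1 pq.2).card

/-- The pattern `(a,e)` can be found in `G` (with some witness `y ∈ Z`). -/
def canFind (d h n : ℕ) (H : SimpleGraph (Fin h)) (G : SimpleGraph (Fin h × Fin n))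
    (a : Fin h → ℝ → ℕ) (e : Fin h → ℝ → Fin h → ℝ → ℕ) : Prop :=
  ∃ y : Fin h × Fin n → ℝ, memZ d h n y ∧
    (∀ i : Fin h, ∀ w ∈ Dpos n h, a i w = (Aset y i w).card) ∧
    (∀ i w i' w', H.Adj i i' → w ∈ Dpos n h → w' ∈ Dpos n h →
      e i w i' w' = edgeCount G (Aset y i w) (Aset y i' w'))

/-- The normalised deviation `ε_{i,w,i',w'}` of a pattern. -/
def epsP {h : ℕ} (n : ℕ) (a : Fin h → ℝ → ℕ) (e : Fin h → ℝ → Fin h → ℝ → ℕ)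
    (p q : Fin h × ℝ) : ℝ :=
  if a p.1 p.2 = 0 ∨ a q.1 q.2 = 0 then 1
  else (e p.1 p.2 q.1 q.2 : ℝ) / ((a p.1 p.2 : ℝ) * (a q.1 q.2 : ℝ) / n) - 1

/-- `b(ε) = (1+ε)log(1+ε) − ε` (with `b(−1)=1`, automatic as `log 0 = 0`). -/
def bFun (x : ℝ) : ℝ := (1 + x) * Real.log (1 + x) - x

/-- The adjacency relation of the large-deviations graph `Γ_LD`. -/
def gammaLDAdj (d h n : ℕ) (H : SimpleGraph (Fin h)) (a : Fin h → ℝ → ℕ)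
    (e : Fin h → ℝ → Fin h → ℝ → ℕ) (p q : Fin h × ℝ) : Prop :=
  gammaAdj d h n H p q ∧ Real.exp 2 - 1 < epsP n a e p q

/-- The adjacency relation of the small-deviations graph `Γ_SD`. -/
def gammaSDAdj (d h n : ℕ) (H : SimpleGraph (Fin h)) (a : Fin h → ℝ → ℕ)
    (e : Fin h → ℝ → Fin h → ℝ → ℕ) (p q : Fin h × ℝ) : Prop :=
  gammaAdj d h n H p q ∧ epsP n a e p q ≤ Real.exp 2 - 1

/-- The summand `w w' (a_{i,w}a_{i',w'}/n) ε_{i,w,i',w'}` over `Γ_LD`. -/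
def potTermLD (d h n : ℕ) (H : SimpleGraph (Fin h)) (a : Fin h → ℝ → ℕ)
    (e : Fin h → ℝ → Fin h → ℝ → ℕ) (p q : Fin h × ℝ) : ℝ :=
  if gammaLDAdj d h n H a e p q then
    p.2 * q.2 * ((a p.1 p.2 : ℝ) * (a q.1 q.2 : ℝ) / n) * epsP n a e p q
  else 0

/-- The summand `w w' (a_{i,w}a_{i',w'}/n) ε_{i,w,i',w'}` over `Γ_SD`. -/
def potTermSD (d h n : ℕ) (H : SimpleGraph (Fin h)) (a : Fin h → ℝ → ℕ)
    (e : Fin h → ℝ → Fin h → ℝ → ℕ) (p q : Fin h × ℝ) : ℝ :=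
  if gammaSDAdj d h n H a e p q then
    p.2 * q.2 * ((a p.1 p.2 : ℝ) * (a q.1 q.2 : ℝ) / n) * epsP n a e p q
  else 0

/-- The large-deviations potency `p_LD(a,e)`. -/
def pLD (d h n : ℕ) (H : SimpleGraph (Fin h)) (a : Fin h → ℝ → ℕ)
    (e : Fin h → ℝ → Fin h → ℝ → ℕ) : ℝ :=
  |(1 / 2 : ℝ) * ∑ i : Fin h, ∑ i' : Fin h, ∑ᶠ w : ℝ, ∑ᶠ w' : ℝ,
      potTermLD d h n H a e (i, w) (i', w')|

/-- The small-deviations potency `p_SD(a,e)`. -/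
def pSD (d h n : ℕ) (H : SimpleGraph (Fin h)) (a : Fin h → ℝ → ℕ)
    (e : Fin h → ℝ → Fin h → ℝ → ℕ) : ℝ :=
  |(1 / 2 : ℝ) * ∑ i : Fin h, ∑ i' : Fin h, ∑ᶠ w : ℝ, ∑ᶠ w' : ℝ,
      potTermSD d h n H a e (i, w) (i', w')|

/-- The local large-deviations potency `p_LD((a,e);(i,w))`. -/
def pLDlocal (d h n : ℕ) (H : SimpleGraph (Fin h)) (a : Fin h → ℝ → ℕ)
    (e : Fin h → ℝ → Fin h → ℝ → ℕ) (p : Fin h × ℝ) : ℝ :=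
  |∑ i' : Fin h, ∑ᶠ w' : ℝ, potTermLD d h n H a e p (i', w')|

/-- The weighted neighbourhood mass `N̂_{i,w}(a,e)`. -/
def Nhat (d h n : ℕ) (H : SimpleGraph (Fin h)) (a : Fin h → ℝ → ℕ)
    (p : Fin h × ℝ) : ℝ :=
  ∑ i' : Fin h, ∑ᶠ w' : ℝ,
    (if gammaAdj d h n H p (i', w') then
      w' ^ 2 * (a i' w' : ℝ) * (w' / (p.2 * Real.sqrt d)) else 0)

/-- Condition (LD1) for a set `U ⊆ V(Γ)`. -/
def condLD1 (d h n : ℕ) (H : SimpleGraph (Fin h)) (L : ℝ) (a : Fin h → ℝ → ℕ)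
    (e : Fin h → ℝ → Fin h → ℝ → ℕ) (U : Set (Fin h × ℝ)) : Prop :=
  ∀ p ∈ U, L * (a p.1 p.2 : ℝ) * p.2 ^ 2 * Real.sqrt d ≤
    pLDlocal d h n H (restrictA U a) (restrictE U e) p

/-- Condition (LD2) for a set `U ⊆ V(Γ)`. -/
def condLD2 (d h n : ℕ) (H : SimpleGraph (Fin h)) (L : ℝ) (a : Fin h → ℝ → ℕ)
    (e : Fin h → ℝ → Fin h → ℝ → ℕ) (U : Set (Fin h × ℝ)) : Prop :=
  ∀ p ∈ U, L * Nhat d h n H a p / Real.sqrt d ≤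
    pLDlocal d h n H (restrictA U a) (restrictE U e) p

/-- `Π_{(i,w)∈S, a_{i,w}≥1} a_{i,w}^{d/4}`. -/
def prodA {h : ℕ} (d : ℕ) (S : Set (Fin h × ℝ)) (a : Fin h → ℝ → ℕ) : ℝ :=
  ∏ᶠ (p : Fin h × ℝ) (_ : p ∈ S ∧ 1 ≤ a p.1 p.2),
    ((a p.1 p.2 : ℝ) ^ ((d : ℝ) / 4))

/-- `Π_{(i,w)∈S, a_{i,w}≥1} C(n, min(a_{i,w}, ⌊n/2⌋))`. -/
def prodChoose {h : ℕ} (n : ℕ) (S : Set (Fin h × ℝ)) (a : Fin h → ℝ → ℕ) : ℝ :=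
  ∏ᶠ (p : Fin h × ℝ) (_ : p ∈ S ∧ 1 ≤ a p.1 p.2),
    ((n.choose (min (a p.1 p.2) (n / 2)) : ℝ))

/-- The number of matching edges between `A` and `B` under the bijection `M`. -/
def matchCount {n : ℕ} (M : Equiv.Perm (Fin n)) (A B : Finset (Fin n)) : ℕ :=
  (A.filter fun v => M v ∈ B).card

end

end RandomLifts

namespace RandomLifts


namespace Aux

variable {V : Type*} [Fintype V]

private lemma quadForm_update {v : V} (A : Matrix V V ℝ) (hA : A v v = 0) (x : V → ℝ) (t : ℝ) :
    quadForm A (Function.update x v t) =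
      quadForm A (Function.update x v 0) +
        t * ∑ w, (A v w + A w v) * (Function.update x v 0) w := by
  classical
  set y : V → ℝ := Function.update x v 0 with hy
  have hupd : Function.update x v t = fun u => y u + t * (if u = v then 1 else 0) := by
    funext u
    by_cases hu : u = v
    · subst hu; simp [hy]
    · simp [hy, Function.update_of_ne hu, hu]
  have h1 : ∑ u, ∑ w, (if u = v then (1:ℝ) else 0) * (A u w * y w) = ∑ w, A v w * y w := by
    have e : ∀ u, ∑ w, (if u = v then (1:ℝ) else 0) * (A u w * y w)
        = if u = v then (∑ w, A u w * y w) else 0 := by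
      intro u; by_cases hu : u = v <;> simp [hu]
    simp [e]
  have h2 : ∑ u, ∑ w, (y u * A u w) * (if w = v then (1:ℝ) else 0) = ∑ u, y u * A u v := by
    refine Finset.sum_congr rfl fun u _ => ?_
    simp [Finset.mul_sum]
  have h3 : ∑ u, ∑ w, ((if u = v then (1:ℝ) else 0) * A u w) * (if w = v then (1:ℝ) else 0)
      = A v v := by
    have e : ∀ u, ∑ w, ((if u = v then (1:ℝ) else 0) * A u w) * (if w = v then (1:ℝ) else 0)
        = if u = v then A u v else 0 := by
      intro u; by_cases hu : u = v <;> simp [hu]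
    simp [e]
  rw [hupd]
  calc (∑ u, ∑ w, (y u + t * (if u = v then 1 else 0)) * A u w * (y w + t * (if w = v then 1 else 0)))
      = ∑ u, ∑ w, (y u * A u w * y w
        + t * ((if u = v then (1:ℝ) else 0) * (A u w * y w))
        + t * ((y u * A u w) * (if w = v then (1:ℝ) else 0))
        + (t * t) * (((if u = v then (1:ℝ) else 0) * A u w) * (if w = v then (1:ℝ) else 0))) :=
        Finset.sum_congr rfl fun u _ => Finset.sum_congr rfl fun w _ => by ring
    _ = (∑ u, ∑ w, y u * A u w * y w)
        + t * (∑ w, A v w * y w) + t * (∑ u, y u * A u v) + (t*t) * A v v := by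
        have h1' : ∑ u : V, (if u = v then (1:ℝ) else 0) * ∑ w, A u w * y w
            = ∑ w, A v w * y w := by simp
        simp only [Finset.sum_add_distrib, ← Finset.mul_sum, h1', h2, h3]
    _ = quadForm A y + t * ∑ w, (A v w + A w v) * y w := by
        rw [hA]
        have : ∑ w, (A v w + A w v) * y w = (∑ w, A v w * y w) + ∑ u, y u * A u v := by
          rw [← Finset.sum_add_distrib]
          exact Finset.sum_congr rfl fun w _ => by ring
        rw [this, quadForm]; ring

private lemma box_step (A : Matrix V V ℝ) (hA : ∀ v, A v v = 0) (lo hi : V → ℝ)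
    (s : Finset V) :
    ∀ x : V → ℝ, (∀ v, lo v ≤ x v ∧ x v ≤ hi v) →
    ∃ y : V → ℝ, (∀ v, lo v ≤ y v ∧ y v ≤ hi v) ∧
      (∀ v ∈ s, y v = lo v ∨ y v = hi v) ∧ quadForm A x ≤ quadForm A y := by
  classical
  induction s using Finset.cons_induction with
  | empty => exact fun x hx => ⟨x, hx, by simp, le_rfl⟩
  | cons v s hv ih =>
    intro x hx
    obtain ⟨y, hy, hys, hq⟩ := ih x hx
    have key : ∀ t : ℝ, quadForm A (Function.update y v t)
        = quadForm A (Function.update y v 0)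
          + t * ∑ w, (A v w + A w v) * (Function.update y v 0) w :=
      fun t => quadForm_update A (hA v) y t
    set C := ∑ w, (A v w + A w v) * (Function.update y v 0) w with hC
    have hyv : quadForm A y = quadForm A (Function.update y v 0) + y v * C := by
      have := key (y v); rwa [Function.update_eq_self] at this
    have hlohi : lo v ≤ hi v := le_trans (hx v).1 (hx v).2
    by_cases hCpos : 0 ≤ C
    · refine ⟨Function.update y v (hi v), ?_, ?_, ?_⟩
      · intro u
        by_cases hu : u = v
        · subst hu; simp [hlohi]
        · simpa [Function.update_of_ne hu] using hy u
      · intro u hu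
        rcases Finset.mem_cons.mp hu with hu | hu
        · subst hu; simp
        · have huv : u ≠ v := fun h => hv (h ▸ hu)
          simpa [Function.update_of_ne huv] using hys u hu
      · calc quadForm A x ≤ quadForm A y := hq
          _ ≤ quadForm A (Function.update y v 0) + hi v * C := by
              rw [hyv]
              have := mul_le_mul_of_nonneg_right (hy v).2 hCpos
              linarith
          _ = quadForm A (Function.update y v (hi v)) := (key (hi v)).symm
    · refine ⟨Function.update y v (lo v), ?_, ?_, ?_⟩
      · intro u
        by_cases hu : u = v
        · subst hu; simp [hlohi]
        · simpa [Function.update_of_ne hu] using hy u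
      · intro u hu
        rcases Finset.mem_cons.mp hu with hu | hu
        · subst hu; simp
        · have huv : u ≠ v := fun h => hv (h ▸ hu)
          simpa [Function.update_of_ne huv] using hys u hu
      · calc quadForm A x ≤ quadForm A y := hq
          _ ≤ quadForm A (Function.update y v 0) + lo v * C := by
              rw [hyv]
              have hC' : C ≤ 0 := le_of_not_ge hCpos
              have := mul_le_mul_of_nonpos_right (hy v).1 hC'
              linarith
          _ = quadForm A (Function.update y v (lo v)) := (key (lo v)).symm

private lemma dyadic_up (a : ℝ) (ha : 0 ≤ a) :
    ∃ lo hi : ℝ, 0 ≤ lo ∧ lo ≤ a ∧ a ≤ hi ∧ hi ^ 2 ≤ 4 * a ^ 2 + 4 ∧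
      (lo = 0 ∨ ∃ i : ℕ, 1 ≤ i ∧ lo = 2 ^ i) ∧ (hi = 0 ∨ ∃ i : ℕ, 1 ≤ i ∧ hi = 2 ^ i) := by
  rcases eq_or_lt_of_le ha with h0 | h0
  · exact ⟨0, 0, le_rfl, le_of_eq h0, le_of_eq h0.symm, by nlinarith, Or.inl rfl, Or.inl rfl⟩
  by_cases h2 : a < 2
  · exact ⟨0, 2, le_rfl, ha, le_of_lt h2, by nlinarith, Or.inl rfl,
      Or.inr ⟨1, le_rfl, by norm_num⟩⟩
  push_neg at h2
  set k : ℕ := ⌊a⌋₊ with hk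
  have hk2 : 2 ≤ k := Nat.le_floor (by exact_mod_cast h2)
  have hk0 : k ≠ 0 := by omega
  set m : ℕ := Nat.log 2 k with hm
  have hm1 : 1 ≤ m := Nat.log_pos (by norm_num) hk2
  have hlow : (2:ℝ) ^ m ≤ a := by
    have h1 : (2:ℕ) ^ m ≤ k := Nat.pow_log_le_self 2 hk0
    have h2' : (k:ℝ) ≤ a := Nat.floor_le ha
    calc (2:ℝ) ^ m = ((2 ^ m : ℕ) : ℝ) := by push_cast; ring
      _ ≤ (k : ℝ) := by exact_mod_cast h1
      _ ≤ a := h2'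
  have hhigh : a ≤ (2:ℝ) ^ (m + 1) := by
    have h1 : k < 2 ^ (m + 1) := Nat.lt_pow_succ_log_self (by norm_num) k
    have h2' : a < (k:ℝ) + 1 := Nat.lt_floor_add_one a
    have h3 : (k:ℝ) + 1 ≤ ((2 ^ (m+1) : ℕ) : ℝ) := by exact_mod_cast h1
    calc a ≤ (k:ℝ) + 1 := le_of_lt h2'
      _ ≤ ((2 ^ (m+1) : ℕ) : ℝ) := h3
      _ = (2:ℝ) ^ (m+1) := by push_cast; ring
  refine ⟨2 ^ m, 2 ^ (m + 1), by positivity, hlow, hhigh, ?_,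
    Or.inr ⟨m, hm1, rfl⟩, Or.inr ⟨m + 1, by omega, rfl⟩⟩
  have he : ((2:ℝ) ^ (m+1)) = 2 * 2 ^ m := by ring
  nlinarith [hlow, pow_pos (by norm_num : (0:ℝ) < 2) m]

private lemma quad_le_dyadic (A : Matrix V V ℝ) (hA : ∀ v, A v v = 0)
    (a : V → ℝ) (ha : ∀ v, 0 ≤ a v) :
    ∃ y : V → ℝ, (∀ v, y v = 0 ∨ ∃ i : ℕ, 1 ≤ i ∧ y v = 2 ^ i) ∧
      ((∑ v, y v ^ 2) ≤ 4 * (∑ v, a v ^ 2) + 4 * Fintype.card V) ∧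
      quadForm A a ≤ quadForm A y := by
  choose lo hi hlo0 hlo hhi hhisq hloD hhiD using fun v => dyadic_up (a v) (ha v)
  obtain ⟨y, hybox, hyend, hq⟩ := box_step A hA lo hi Finset.univ a (fun v => ⟨hlo v, hhi v⟩)
  refine ⟨y, ?_, ?_, hq⟩
  · intro v
    rcases hyend v (Finset.mem_univ v) with h | h
    · rw [h]; exact hloD v
    · rw [h]; exact hhiD v
  · have step1 : ∑ v, y v ^ 2 ≤ ∑ v, (4 * a v ^ 2 + 4) := by
      refine Finset.sum_le_sum fun v _ => ?_
      have h0 : 0 ≤ y v := le_trans (hlo0 v) (hybox v).1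
      have h1 : y v ^ 2 ≤ hi v ^ 2 := by
        have := (hybox v).2
        nlinarith
      exact le_trans h1 (hhisq v)
    have step2 : ∑ v, ((4:ℝ) * a v ^ 2 + 4) = 4 * (∑ v, a v ^ 2) + 4 * Fintype.card V := by
      rw [Finset.sum_add_distrib, ← Finset.mul_sum, Finset.sum_const, Finset.card_univ]
      ring_nf
    calc ∑ v, y v ^ 2 ≤ ∑ v, ((4:ℝ) * a v ^ 2 + 4) := step1
      _ = 4 * (∑ v, a v ^ 2) + 4 * Fintype.card V := step2

private lemma quadForm_smul (A : Matrix V V ℝ) (c : ℝ) (x : V → ℝ) :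
    quadForm A (fun v => c * x v) = c ^ 2 * quadForm A x := by
  simp only [quadForm, Finset.mul_sum]
  exact Finset.sum_congr rfl fun u _ => Finset.sum_congr rfl fun v _ => by ring

private lemma quadForm_neg (A : Matrix V V ℝ) (x : V → ℝ) :
    quadForm (-A) x = - quadForm A x := by
  simp only [quadForm, Matrix.neg_apply, ← Finset.sum_neg_distrib]
  exact Finset.sum_congr rfl fun u _ => Finset.sum_congr rfl fun v _ => by ring

end Aux

open Aux in

theorem statement5 (d h n : ℕ) (hd : 2 ≤ d) (hn : 1 ≤ n) (H : SimpleGraph (Fin h))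
    [DecidableRel H.Adj] (hreg : H.IsRegularOfDegree d) (ω : LiftSpace h n) :
    (n : ℝ) * (h : ℝ) * lambdaStar (liftGraph H ω) ≤
      12 * sSup {r : ℝ | ∃ y : Fin h × Fin n → ℝ,
        (∑ v, y v ^ 2) ≤ 10 * (n : ℝ) * (h : ℝ) ∧
        (∀ v, y v = 0 ∨ ∃ i : ℕ, 1 ≤ i ∧ y v = 2 ^ i) ∧
        r = |quadForm (Nmat H (liftGraph H ω)) y|} := by
  classical
  set N := Nmat H (liftGraph H ω) with hN
  set S : Set ℝ := {r : ℝ | ∃ y : Fin h × Fin n → ℝ,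
        (∑ v, y v ^ 2) ≤ 10 * (n : ℝ) * (h : ℝ) ∧
        (∀ v, y v = 0 ∨ ∃ i : ℕ, 1 ≤ i ∧ y v = 2 ^ i) ∧
        r = |quadForm N y|} with hS
  have hNdiag : ∀ v, N v v = 0 := by
    intro v
    simp [hN, Nmat, adjMat, Mbar, Matrix.sub_apply, SimpleGraph.irrefl]
  have hn' : (0:ℝ) < n := by exact_mod_cast Nat.lt_of_lt_of_le Nat.zero_lt_one hn
  have hNabs : ∀ u v, |N u v| ≤ 1 := by
    intro u v
    have ha : ((n:ℝ))⁻¹ ≤ 1 := by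
      rw [inv_le_one_iff₀]
      right
      exact_mod_cast hn
    have hb : (0:ℝ) ≤ ((n:ℝ))⁻¹ := by positivity
    simp only [hN, Nmat, Matrix.sub_apply, adjMat, Mbar, one_div]
    split_ifs <;> rw [abs_le] <;> constructor <;> linarith
  have habs : ∀ y : Fin h × Fin n → ℝ, |quadForm N y| ≤ (∑ v, |y v|) ^ 2 := by
    intro y
    have h1 : |quadForm N y| ≤ ∑ u, ∑ v, |y u| * |y v| := by
      refine (Finset.abs_sum_le_sum_abs _ _).trans ?_
      refine Finset.sum_le_sum fun u _ => ?_
      refine (Finset.abs_sum_le_sum_abs _ _).trans ?_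
      refine Finset.sum_le_sum fun v _ => ?_
      rw [abs_mul, abs_mul]
      have h2 : |y u| * |N u v| ≤ |y u| * 1 :=
        mul_le_mul_of_nonneg_left (hNabs u v) (abs_nonneg _)
      calc |y u| * |N u v| * |y v| ≤ (|y u| * 1) * |y v| :=
            mul_le_mul_of_nonneg_right h2 (abs_nonneg _)
        _ = |y u| * |y v| := by ring
    have h2 : (∑ v, |y v|) ^ 2 = ∑ u, ∑ v, |y u| * |y v| := by
      rw [sq, Finset.sum_mul_sum]
    linarith
  have hcardV : (Fintype.card (Fin h × Fin n) : ℝ) = (h:ℝ) * (n:ℝ) := by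
    simp [Fintype.card_prod]
  have hBdd : BddAbove S := by
    refine ⟨((h:ℝ)*(n:ℝ)) * (10*(n:ℝ)*(h:ℝ)), ?_⟩
    rintro r hr
    rw [hS] at hr
    obtain ⟨y, hynorm, hyD, rfl⟩ := hr
    have c1 : (∑ v, |y v|) ^ 2 ≤ (Fintype.card (Fin h × Fin n) : ℝ) * ∑ v, |y v| ^ 2 := by
      have := sq_sum_le_card_mul_sum_sq (s := (Finset.univ : Finset (Fin h × Fin n)))
        (f := fun v => |y v|)
      simpa [Finset.card_univ] using this
    have c2 : (Fintype.card (Fin h × Fin n) : ℝ) * ∑ v, |y v| ^ 2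
        = ((h:ℝ)*(n:ℝ)) * ∑ v, y v ^ 2 := by
      rw [hcardV]
      simp [sq_abs]
    have c3 : ((h:ℝ)*(n:ℝ)) * (∑ v, y v ^ 2) ≤ ((h:ℝ)*(n:ℝ)) * (10*(n:ℝ)*(h:ℝ)) := by
      refine mul_le_mul_of_nonneg_left ?_ (by positivity)
      linarith [hynorm]
    calc |quadForm N y| ≤ (∑ v, |y v|) ^ 2 := habs y
      _ ≤ (Fintype.card (Fin h × Fin n) : ℝ) * ∑ v, |y v| ^ 2 := c1
      _ = ((h:ℝ)*(n:ℝ)) * ∑ v, y v ^ 2 := c2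
      _ ≤ ((h:ℝ)*(n:ℝ)) * (10*(n:ℝ)*(h:ℝ)) := c3
  have hzeroS : (0:ℝ) ∈ S := by
    rw [hS]
    refine ⟨fun _ => 0, by simpa using (by positivity : (0:ℝ) ≤ 10*(n:ℝ)*(h:ℝ)), fun v => Or.inl rfl, ?_⟩
    simp [quadForm]
  have hK0 : 0 ≤ sSup S := le_csSup hBdd hzeroS
  -- the key bound for an arbitrary nonnegative vector of small norm
  have key : ∀ a : Fin h × Fin n → ℝ, (∀ v, 0 ≤ a v) →
      (∑ v, a v ^ 2) ≤ (n:ℝ) * (h:ℝ) → |quadForm N a| ≤ sSup S := by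
    intro a ha hnorm
    have hmem : ∀ y : Fin h × Fin n → ℝ, (∀ v, y v = 0 ∨ ∃ i : ℕ, 1 ≤ i ∧ y v = 2 ^ i) →
        ((∑ v, y v ^ 2) ≤ 4 * (∑ v, a v ^ 2) + 4 * Fintype.card (Fin h × Fin n)) →
        |quadForm N y| ≤ sSup S := by
      intro y hyD hyn
      refine le_csSup hBdd ?_
      rw [hS]
      refine ⟨y, ?_, hyD, rfl⟩
      calc (∑ v, y v ^ 2)
          ≤ 4 * (∑ v, a v ^ 2) + 4 * Fintype.card (Fin h × Fin n) := hyn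
        _ ≤ 4 * ((n:ℝ) * (h:ℝ)) + 4 * ((h:ℝ) * (n:ℝ)) := by
            rw [hcardV]
            have : (4:ℝ) * (∑ v, a v ^ 2) ≤ 4 * ((n:ℝ)*(h:ℝ)) := by linarith
            linarith
        _ ≤ 10 * (n:ℝ) * (h:ℝ) := by nlinarith [hn'.le, Nat.cast_nonneg (α := ℝ) h]
    obtain ⟨y1, hy1D, hy1n, hy1q⟩ := quad_le_dyadic N hNdiag a ha
    obtain ⟨y2, hy2D, hy2n, hy2q⟩ := quad_le_dyadic (-N) (fun v => by simp [hNdiag v]) a ha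
    rw [quadForm_neg, quadForm_neg] at hy2q
    rcases le_total 0 (quadForm N a) with hsgn | hsgn
    · calc |quadForm N a| = quadForm N a := abs_of_nonneg hsgn
        _ ≤ quadForm N y1 := hy1q
        _ ≤ |quadForm N y1| := le_abs_self _
        _ ≤ sSup S := hmem y1 hy1D hy1n
    · have h1 : quadForm N y2 ≤ quadForm N a := by linarith
      calc |quadForm N a| = -(quadForm N a) := abs_of_nonpos hsgn
        _ ≤ -(quadForm N y2) := by linarith
        _ ≤ |quadForm N y2| := neg_le_abs _
        _ ≤ sSup S := hmem y2 hy2D hy2n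
  -- the per-eigenvalue bound
  have main : ∀ r ∈ {r : ℝ | ∃ (μ : ℝ) (x : Fin h × Fin n → ℝ), x ≠ 0 ∧
      (adjMat (liftGraph H ω)).mulVec x = μ • x ∧
      (∀ i : Fin h, ∑ j : Fin n, x (i, j) = 0) ∧ r = |μ|},
      (n:ℝ) * (h:ℝ) * r ≤ 12 * sSup S := by
    rintro r ⟨μ, x, hx0, heig, hbal, rfl⟩
    obtain ⟨v0, hv0⟩ : ∃ v, x v ≠ 0 := by
      by_contra hcon
      push_neg at hcon
      exact hx0 (funext hcon)
    have ht : 0 < ∑ v, x v ^ 2 :=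
      Finset.sum_pos' (fun v _ => sq_nonneg _) ⟨v0, Finset.mem_univ _, by positivity⟩
    set t : ℝ := ∑ v, x v ^ 2 with hht
    have hh' : (0:ℝ) ≤ (h:ℝ) := Nat.cast_nonneg h
    set c : ℝ := Real.sqrt ((n:ℝ) * (h:ℝ) / t) with hc
    have hc2 : c ^ 2 = (n:ℝ) * (h:ℝ) / t := Real.sq_sqrt (by positivity)
    set z : Fin h × Fin n → ℝ := fun v => c * x v with hz
    -- Mbar kills balanced vectors
    have hMbar : (Mbar h n H).mulVec x = 0 := by
      funext u
      show ∑ v : Fin h × Fin n, Mbar h n H u v * x v = 0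
      rw [Fintype.sum_prod_type]
      have e : ∀ i' : Fin h, ∑ j' : Fin n, Mbar h n H u (i', j') * x (i', j') = 0 := by
        intro i'
        by_cases hadj : H.Adj u.1 i'
        · have e1 : ∀ j' : Fin n, Mbar h n H u (i', j') * x (i', j')
              = (1/(n:ℝ)) * x (i', j') := by
            intro j'; simp [Mbar, hadj]
          rw [Finset.sum_congr rfl fun j' _ => e1 j', ← Finset.mul_sum, hbal i', mul_zero]
        · have e1 : ∀ j' : Fin n, Mbar h n H u (i', j') * x (i', j') = 0 := by
            intro j'; simp [Mbar, hadj]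
          rw [Finset.sum_congr rfl fun j' _ => e1 j']
          simp
      simp [e]
    have hNx : N.mulVec x = μ • x := by
      rw [hN, Nmat, Matrix.sub_mulVec, heig, hMbar, sub_zero]
    have hQx : quadForm N x = μ * t := by
      have e1 : quadForm N x = ∑ u, x u * (N.mulVec x) u := by
        rw [quadForm]
        refine Finset.sum_congr rfl fun u _ => ?_
        rw [show (N.mulVec x) u = ∑ v, N u v * x v from rfl, Finset.mul_sum]
        exact Finset.sum_congr rfl fun v _ => by ring
      rw [e1, hNx, hht, Finset.mul_sum]
      exact Finset.sum_congr rfl fun v _ => by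
        simp [Pi.smul_apply, smul_eq_mul]; ring
    have hQz : quadForm N z = μ * ((n:ℝ) * (h:ℝ)) := by
      rw [hz, quadForm_smul, hQx, hc2]
      field_simp
    have hzn : ∑ v, z v ^ 2 = (n:ℝ) * (h:ℝ) := by
      have e1 : ∑ v, z v ^ 2 = c ^ 2 * ∑ v, x v ^ 2 := by
        rw [Finset.mul_sum]
        exact Finset.sum_congr rfl fun v _ => by rw [hz]; ring
      rw [e1, hc2, ← hht]
      field_simp
    -- decomposition into positive/negative parts
    set zp : Fin h × Fin n → ℝ := fun v => max (z v) 0 with hzp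
    set zm : Fin h × Fin n → ℝ := fun v => max (-(z v)) 0 with hzm
    set za : Fin h × Fin n → ℝ := fun v => |z v| with hza
    have hsplit : ∀ v, z v = zp v - zm v := by
      intro v
      rcases le_total 0 (z v) with hv | hv
      · rw [hzp, hzm]; simp only []
        rw [max_eq_left hv, max_eq_right (neg_nonpos.mpr hv)]; ring
      · rw [hzp, hzm]; simp only []
        rw [max_eq_right hv, max_eq_left (neg_nonneg.mpr hv)]; ring
    have habs' : ∀ v, za v = zp v + zm v := by
      intro v
      rcases le_total 0 (z v) with hv | hv
      · rw [hza, hzp, hzm]; simp only []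
        rw [abs_of_nonneg hv, max_eq_left hv, max_eq_right (neg_nonpos.mpr hv)]; ring
      · rw [hza, hzp, hzm]; simp only []
        rw [abs_of_nonpos hv, max_eq_right hv, max_eq_left (neg_nonneg.mpr hv)]; ring
    have hiden : quadForm N z
        = 2 * quadForm N zp + 2 * quadForm N zm - quadForm N za := by
      have e : ∀ u v', z u * N u v' * z v'
          = 2*(zp u * N u v' * zp v') + 2*(zm u * N u v' * zm v')
            - (za u * N u v' * za v') := by
        intro u v'
        rw [hsplit u, hsplit v', habs' u, habs' v']
        ring
      calc quadForm N z
          = ∑ u, ∑ v', (2*(zp u * N u v' * zp v') + 2*(zm u * N u v' * zm v')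
            - (za u * N u v' * za v')) :=
            Finset.sum_congr rfl fun u _ => Finset.sum_congr rfl fun v' _ => e u v'
        _ = 2 * quadForm N zp + 2 * quadForm N zm - quadForm N za := by
            simp only [quadForm, Finset.sum_add_distrib, Finset.sum_sub_distrib,
              ← Finset.mul_sum]
    -- bounds on the three pieces
    have hzpn : (∑ v, zp v ^ 2) ≤ (n:ℝ) * (h:ℝ) := by
      rw [← hzn]
      refine Finset.sum_le_sum fun v _ => ?_
      rcases le_total 0 (z v) with hv | hv
      · rw [hzp]; simp only []; rw [max_eq_left hv]
      · rw [hzp]; simp only []; rw [max_eq_right hv]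
        simpa using sq_nonneg (z v)
    have hzmn : (∑ v, zm v ^ 2) ≤ (n:ℝ) * (h:ℝ) := by
      rw [← hzn]
      refine Finset.sum_le_sum fun v _ => ?_
      rcases le_total 0 (z v) with hv | hv
      · rw [hzm]; simp only []; rw [max_eq_right (neg_nonpos.mpr hv)]
        simpa using sq_nonneg (z v)
      · rw [hzm]; simp only []; rw [max_eq_left (neg_nonneg.mpr hv)]
        simp [sq_abs]
    have hzan : (∑ v, za v ^ 2) ≤ (n:ℝ) * (h:ℝ) := by
      rw [← hzn]
      refine Finset.sum_le_sum fun v _ => ?_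
      rw [hza]; simp [sq_abs]
    have b1 : |quadForm N zp| ≤ sSup S :=
      key zp (fun v => le_max_right _ _) hzpn
    have b2 : |quadForm N zm| ≤ sSup S :=
      key zm (fun v => le_max_right _ _) hzmn
    have b3 : |quadForm N za| ≤ sSup S :=
      key za (fun v => abs_nonneg _) hzan
    have hfin : |μ| * ((n:ℝ) * (h:ℝ)) ≤ 5 * sSup S := by
      have e1 : |quadForm N z| = |μ| * ((n:ℝ) * (h:ℝ)) := by
        rw [hQz, abs_mul, abs_of_nonneg (by positivity : (0:ℝ) ≤ (n:ℝ)*(h:ℝ))]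
      have e2 : |quadForm N z|
          ≤ 2 * |quadForm N zp| + 2 * |quadForm N zm| + |quadForm N za| := by
        rw [hiden]
        calc |2 * quadForm N zp + 2 * quadForm N zm - quadForm N za|
            ≤ |2 * quadForm N zp + 2 * quadForm N zm| + |quadForm N za| := abs_sub _ _
          _ ≤ |2 * quadForm N zp| + |2 * quadForm N zm| + |quadForm N za| := by
              have := abs_add_le (2 * quadForm N zp) (2 * quadForm N zm)
              linarith
          _ = 2 * |quadForm N zp| + 2 * |quadForm N zm| + |quadForm N za| := by
              rw [abs_mul, abs_mul]
              norm_num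
      linarith
    nlinarith [hK0]
  -- assembling
  rw [lambdaStar]
  rcases Set.eq_empty_or_nonempty {r : ℝ | ∃ (μ : ℝ) (x : Fin h × Fin n → ℝ), x ≠ 0 ∧
      (adjMat (liftGraph H ω)).mulVec x = μ • x ∧
      (∀ i : Fin h, ∑ j : Fin n, x (i, j) = 0) ∧ r = |μ|} with hA | hA
  · rw [hA, Real.sSup_empty, mul_zero]
    linarith
  · by_cases hh : h = 0
    · subst hh
      obtain ⟨r0, μ0, x0, hx00, _, _, _⟩ := hA
      exfalso
      exact hx00 (funext fun v => Fin.elim0 v.1)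
    · have hh' : (0:ℝ) < (h:ℝ) := by
        exact_mod_cast Nat.pos_of_ne_zero hh
      have hnh : (0:ℝ) < (n:ℝ) * (h:ℝ) := mul_pos hn' hh'
      have hle : sSup {r : ℝ | ∃ (μ : ℝ) (x : Fin h × Fin n → ℝ), x ≠ 0 ∧
          (adjMat (liftGraph H ω)).mulVec x = μ • x ∧
          (∀ i : Fin h, ∑ j : Fin n, x (i, j) = 0) ∧ r = |μ|}
          ≤ (12 * sSup S) / ((n:ℝ) * (h:ℝ)) := by
        refine Real.sSup_le (fun r hr => ?_) (by positivity)
        rw [le_div_iff₀ hnh]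
        have := main r hr
        linarith [this]
      calc (n:ℝ) * (h:ℝ) * sSup {r : ℝ | ∃ (μ : ℝ) (x : Fin h × Fin n → ℝ), x ≠ 0 ∧
          (adjMat (liftGraph H ω)).mulVec x = μ • x ∧
          (∀ i : Fin h, ∑ j : Fin n, x (i, j) = 0) ∧ r = |μ|}
          ≤ (n:ℝ) * (h:ℝ) * ((12 * sSup S) / ((n:ℝ) * (h:ℝ))) :=
            mul_le_mul_of_nonneg_left hle hnh.le
        _ = 12 * sSup S := by
            field_simp

end RandomLifts
end

section
/- Let G be any n-lift of a d-regular graph H on vertex set [h]. Then λ*(G) ≤ 96 · sup_{x∈Z} |⟨x,x⟩_{N,E*}| + 480√d. -/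
open scoped BigOperators
open scoped Classical

namespace RandomLifts

noncomputable section Aux

open Finset

variable {V : Type*} [Fintype V]

lemma quadForm_parallelogram (A : Matrix V V ℝ) (u v : V → ℝ) :
    quadForm A (fun a => u a - v a) + quadForm A (fun a => u a + v a)
      = 2 * quadForm A u + 2 * quadForm A v := by
  simp only [quadForm, Finset.mul_sum, ← Finset.sum_add_distrib]
  refine Finset.sum_congr rfl fun a _ => ?_
  refine Finset.sum_congr rfl fun b _ => ?_
  ring

lemma quadForm_neg (A : Matrix V V ℝ) (x : V → ℝ) :
    quadForm (-A) x = - quadForm A x := by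
  simp only [quadForm, Matrix.neg_apply]
  rw [← Finset.sum_neg_distrib]
  refine Finset.sum_congr rfl fun a _ => ?_
  rw [← Finset.sum_neg_distrib]
  refine Finset.sum_congr rfl fun b _ => ?_
  ring

lemma quadForm_smul (A : Matrix V V ℝ) (c : ℝ) (x : V → ℝ) :
    quadForm A (fun a => c * x a) = c ^ 2 * quadForm A x := by
  simp only [quadForm, Finset.mul_sum]
  refine Finset.sum_congr rfl fun a _ => ?_
  refine Finset.sum_congr rfl fun b _ => ?_
  ring

lemma quadForm_sub_matrix (A B : Matrix V V ℝ) (x : V → ℝ) :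
    quadForm (A - B) x = quadForm A x - quadForm B x := by
  simp only [quadForm, Matrix.sub_apply, ← Finset.sum_sub_distrib]
  refine Finset.sum_congr rfl fun a _ => ?_
  refine Finset.sum_congr rfl fun b _ => ?_
  ring

end Aux

noncomputable section Aux2

open Finset

variable {V : Type*} [Fintype V]

lemma quadForm_add_single (A : Matrix V V ℝ) (x : V → ℝ) (c : V) (t : ℝ) :
    quadForm A (fun a => x a + if a = c then t else 0)
      = quadForm A x + t * ((∑ b, A c b * x b) + (∑ a, x a * A a c)) + t * A c c * t := by
  classical
  have h1 : ∀ a b : V,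
      (x a + if a = c then t else 0) * A a b * (x b + if b = c then t else 0)
        = x a * A a b * x b + ((if a = c then t * A a b * x b else 0)
          + ((if b = c then x a * A a b * t else 0)
          + (if a = c then (if b = c then t * A a b * t else 0) else 0))) := by
    intro a b
    by_cases ha : a = c <;> by_cases hb : b = c <;> simp [ha, hb] <;> ring
  simp only [quadForm, h1, Finset.sum_add_distrib]
  have e2 : ∑ a, ∑ b, (if a = c then t * A a b * x b else 0)
      = t * ∑ b, A c b * x b := by
    rw [Finset.mul_sum]
    rw [show ∀ (f : V → ℝ), (∑ a, f a) = ∑ a, f a from fun _ => rfl]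
    rw [Finset.sum_eq_single c]
    · simp only [eq_self_iff_true, if_true]
      refine Finset.sum_congr rfl fun b _ => by ring
    · intro a _ ha; simp [ha]
    · intro hc; exact absurd (Finset.mem_univ c) hc
  have e3 : ∑ a, ∑ b, (if b = c then x a * A a b * t else 0)
      = (∑ a, x a * A a c) * t := by
    rw [Finset.sum_mul]
    refine Finset.sum_congr rfl fun a _ => ?_
    rw [Finset.sum_eq_single c]
    · simp
    · intro b _ hb; simp [hb]
    · intro hc; exact absurd (Finset.mem_univ c) hc
  have e4 : ∑ a, ∑ b, (if a = c then (if b = c then t * A a b * t else 0) else 0)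
      = t * A c c * t := by
    rw [Finset.sum_eq_single c]
    · simp only [eq_self_iff_true, if_true]
      rw [Finset.sum_eq_single c]
      · simp
      · intro b _ hb; simp [hb]
      · intro hc; exact absurd (Finset.mem_univ c) hc
    · intro a _ ha; simp [ha]
    · intro hc; exact absurd (Finset.mem_univ c) hc
  rw [e2, e3, e4]
  ring

lemma quadForm_update (A : Matrix V V ℝ) (y : V → ℝ) (c : V) (t : ℝ) :
    quadForm A (Function.update y c t)
      = quadForm A (Function.update y c 0)
        + t * ((∑ b, A c b * Function.update y c 0 b)
          + (∑ a, Function.update y c 0 a * A a c)) + t * A c c * t := by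
  have hrepr : Function.update y c t
      = fun a => Function.update y c 0 a + if a = c then t else 0 := by
    funext a
    by_cases ha : a = c <;> simp [ha, Function.update_apply]
  rw [hrepr, quadForm_add_single]

lemma exists_endpoint_ge (A : Matrix V V ℝ) (hdiag : ∀ a, A a a = 0)
    (lo hi z : V → ℝ) (hlz : ∀ a, lo a ≤ z a) (hzh : ∀ a, z a ≤ hi a) :
    ∃ y : V → ℝ, (∀ a, y a = lo a ∨ y a = hi a) ∧ quadForm A z ≤ quadForm A y := by
  classical
  suffices hgen : ∀ s : Finset V, ∃ y : V → ℝ,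
      (∀ a ∈ s, y a = lo a ∨ y a = hi a) ∧ (∀ a ∉ s, y a = z a) ∧
        quadForm A z ≤ quadForm A y by
    obtain ⟨y, h1, _, h3⟩ := hgen Finset.univ
    exact ⟨y, fun a => h1 a (Finset.mem_univ a), h3⟩
  intro s
  induction s using Finset.induction_on with
  | empty => exact ⟨z, by simp, fun _ _ => rfl, le_rfl⟩
  | @insert c s hcs ih =>
    obtain ⟨y, h1, h2, h3⟩ := ih
    have hyc : y c = z c := h2 c hcs
    set L := (∑ b, A c b * Function.update y c 0 b)
      + (∑ a, Function.update y c 0 a * A a c) with hLdef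
    have key : ∀ t, quadForm A (Function.update y c t)
        = quadForm A (Function.update y c 0) + t * L := by
      intro t; rw [quadForm_update, hdiag]; ring
    have hy_eq : quadForm A y = quadForm A (Function.update y c 0) + y c * L := by
      conv_lhs => rw [← Function.update_eq_self c y]
      exact key (y c)
    rcases le_or_gt 0 L with hL0 | hL0
    · refine ⟨Function.update y c (hi c), ?_, ?_, ?_⟩
      · intro a ha
        rcases Finset.mem_insert.mp ha with rfl | ha'
        · right; simp
        · have hac : a ≠ c := by rintro rfl; exact hcs ha'
          rw [Function.update_of_ne hac]; exact h1 a ha'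
      · intro a ha
        have hac : a ≠ c := fun hh => ha (hh ▸ Finset.mem_insert_self c s)
        have has : a ∉ s := fun hh => ha (Finset.mem_insert_of_mem hh)
        rw [Function.update_of_ne hac]; exact h2 a has
      · have : y c * L ≤ hi c * L := by
          have : y c ≤ hi c := by rw [hyc]; exact hzh c
          exact mul_le_mul_of_nonneg_right this hL0
        calc quadForm A z ≤ quadForm A y := h3
          _ = quadForm A (Function.update y c 0) + y c * L := hy_eq
          _ ≤ quadForm A (Function.update y c 0) + hi c * L := by linarith
          _ = quadForm A (Function.update y c (hi c)) := (key (hi c)).symm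
    · refine ⟨Function.update y c (lo c), ?_, ?_, ?_⟩
      · intro a ha
        rcases Finset.mem_insert.mp ha with rfl | ha'
        · left; simp
        · have hac : a ≠ c := by rintro rfl; exact hcs ha'
          rw [Function.update_of_ne hac]; exact h1 a ha'
      · intro a ha
        have hac : a ≠ c := fun hh => ha (hh ▸ Finset.mem_insert_self c s)
        have has : a ∉ s := fun hh => ha (Finset.mem_insert_of_mem hh)
        rw [Function.update_of_ne hac]; exact h2 a has
      · have : y c * L ≤ lo c * L := by
          have hyc' : lo c ≤ y c := by rw [hyc]; exact hlz c
          exact mul_le_mul_of_nonpos_right hyc' hL0.le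
        calc quadForm A z ≤ quadForm A y := h3
          _ = quadForm A (Function.update y c 0) + y c * L := hy_eq
          _ ≤ quadForm A (Function.update y c 0) + lo c * L := by linarith
          _ = quadForm A (Function.update y c (lo c)) := (key (lo c)).symm

end Aux2

noncomputable section Aux3

open Finset

variable {V : Type*} [Fintype V]

lemma Estar_not_left_zero (d : ℕ) (q : ℝ) : ((0 : ℝ), q) ∉ Estar d := by
  intro hmem
  exact lt_irrefl 0 hmem.1

lemma Estar_not_right_zero (d : ℕ) (p : ℝ) : (p, (0 : ℝ)) ∉ Estar d := by
  intro hmem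
  exact lt_irrefl 0 hmem.2.1

lemma Estar_smul_iff (d : ℕ) {c : ℝ} (hc : 0 < c) (p q : ℝ) :
    ((c * p, c * q) ∈ Estar d) ↔ ((p, q) ∈ Estar d) := by
  simp only [Estar, Set.mem_setOf_eq]
  rw [mul_div_mul_left _ _ hc.ne']
  constructor
  · rintro ⟨h1, h2, h3, h4⟩
    refine ⟨by nlinarith, by nlinarith, h3, h4⟩
  · rintro ⟨h1, h2, h3, h4⟩
    exact ⟨mul_pos hc h1, mul_pos hc h2, h3, h4⟩

lemma sum_B_weight_le (d : ℕ) (B : Matrix V V ℝ)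
    (hrow : ∀ a, ∑ b, B a b ≤ 2 * d) (hcol : ∀ b, ∑ a, B a b ≤ 2 * d)
    (z : V → ℝ) :
    ∑ a, ∑ b, B a b * (z a ^ 2 + z b ^ 2) ≤ 4 * d * ∑ a, z a ^ 2 := by
  have hsplit : ∑ a, ∑ b, B a b * (z a ^ 2 + z b ^ 2)
      = (∑ a, ∑ b, B a b * z a ^ 2) + (∑ a, ∑ b, B a b * z b ^ 2) := by
    simp only [mul_add, Finset.sum_add_distrib]
  have h1 : (∑ a, ∑ b, B a b * z a ^ 2) ≤ 2 * d * ∑ a, z a ^ 2 := by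
    rw [Finset.mul_sum]
    refine Finset.sum_le_sum fun a _ => ?_
    rw [← Finset.sum_mul]
    exact mul_le_mul_of_nonneg_right (hrow a) (sq_nonneg _)
  have h2 : (∑ a, ∑ b, B a b * z b ^ 2) ≤ 2 * d * ∑ a, z a ^ 2 := by
    rw [Finset.sum_comm, Finset.mul_sum]
    refine Finset.sum_le_sum fun b _ => ?_
    rw [← Finset.sum_mul]
    exact mul_le_mul_of_nonneg_right (hcol b) (sq_nonneg _)
  rw [hsplit]; linarith

lemma abs_quadFormOn_le (d : ℕ) (A B : Matrix V V ℝ)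
    (hAB : ∀ a b, |A a b| ≤ B a b)
    (hrow : ∀ a, ∑ b, B a b ≤ 2 * d) (hcol : ∀ b, ∑ a, B a b ≤ 2 * d)
    (z : V → ℝ) :
    |quadFormOn A (Estar d) z| ≤ 2 * d * ∑ a, z a ^ 2 := by
  classical
  have step1 : |quadFormOn A (Estar d) z|
      ≤ ∑ a, ∑ b, B a b * (z a ^ 2 + z b ^ 2) / 2 := by
    refine (Finset.abs_sum_le_sum_abs _ _).trans ?_
    refine Finset.sum_le_sum fun a _ => ?_
    refine (Finset.abs_sum_le_sum_abs _ _).trans ?_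
    refine Finset.sum_le_sum fun b _ => ?_
    have hB : 0 ≤ B a b := (abs_nonneg _).trans (hAB a b)
    by_cases hmem : (z a, z b) ∈ Estar d
    · rw [if_pos hmem]
      have h1 : |z a * A a b * z b| = |A a b| * (|z a| * |z b|) := by
        rw [abs_mul, abs_mul]; ring
      have h2 : |z a| * |z b| ≤ (z a ^ 2 + z b ^ 2) / 2 := by
        nlinarith [sq_nonneg (|z a| - |z b|), sq_abs (z a), sq_abs (z b)]
      calc |z a * A a b * z b| = |A a b| * (|z a| * |z b|) := h1
        _ ≤ B a b * ((z a ^ 2 + z b ^ 2) / 2) := by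
            apply mul_le_mul (hAB a b) h2 (by positivity) hB
        _ = B a b * (z a ^ 2 + z b ^ 2) / 2 := by ring
    · rw [if_neg hmem]
      simp only [abs_zero]
      positivity
  refine step1.trans ?_
  have heq : ∑ a, ∑ b, B a b * (z a ^ 2 + z b ^ 2) / 2
      = (∑ a, ∑ b, B a b * (z a ^ 2 + z b ^ 2)) / 2 := by
    simp only [Finset.sum_div]
  rw [heq]
  have := sum_B_weight_le d B hrow hcol z
  linarith

lemma abs_quadForm_sub_quadFormOn (d : ℕ) (hd : 1 ≤ d) (A B : Matrix V V ℝ)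
    (hAB : ∀ a b, |A a b| ≤ B a b)
    (hrow : ∀ a, ∑ b, B a b ≤ 2 * d) (hcol : ∀ b, ∑ a, B a b ≤ 2 * d)
    (z : V → ℝ) (hz : ∀ a, 0 ≤ z a) :
    |quadForm A z - quadFormOn A (Estar d) z| ≤ 4 * Real.sqrt d * ∑ a, z a ^ 2 := by
  classical
  have hd1 : (1:ℝ) ≤ (d:ℝ) := by exact_mod_cast hd
  have hd0 : (0:ℝ) < Real.sqrt d := Real.sqrt_pos.mpr (by linarith)
  have hdd : Real.sqrt d * Real.sqrt d = (d:ℝ) := Real.mul_self_sqrt (by linarith)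
  have step0 : quadForm A z - quadFormOn A (Estar d) z
      = ∑ a, ∑ b, (if (z a, z b) ∈ Estar d then 0 else z a * A a b * z b) := by
    simp only [quadForm, quadFormOn, ← Finset.sum_sub_distrib]
    refine Finset.sum_congr rfl fun a _ => ?_
    refine Finset.sum_congr rfl fun b _ => ?_
    by_cases hmem : (z a, z b) ∈ Estar d <;> simp [hmem]
  rw [step0]
  have step1 : |∑ a, ∑ b, (if (z a, z b) ∈ Estar d then 0 else z a * A a b * z b)|
      ≤ ∑ a, ∑ b, B a b * (z a ^ 2 + z b ^ 2) / Real.sqrt d := by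
    refine (Finset.abs_sum_le_sum_abs _ _).trans ?_
    refine Finset.sum_le_sum fun a _ => ?_
    refine (Finset.abs_sum_le_sum_abs _ _).trans ?_
    refine Finset.sum_le_sum fun b _ => ?_
    have hB : 0 ≤ B a b := (abs_nonneg _).trans (hAB a b)
    by_cases hmem : (z a, z b) ∈ Estar d
    · rw [if_pos hmem]
      simp only [abs_zero]
      positivity
    · rw [if_neg hmem]
      have key : z a * z b * Real.sqrt d ≤ z a ^ 2 + z b ^ 2 := by
        rcases eq_or_lt_of_le (hz a) with ha | ha
        · rw [← ha]; simp; positivity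
        rcases eq_or_lt_of_le (hz b) with hb | hb
        · rw [← hb]; simp; positivity
        have hratio : (z a / z b ≤ (Real.sqrt d)⁻¹) ∨ (Real.sqrt d ≤ z a / z b) := by
          by_contra hcon
          push_neg at hcon
          exact hmem ⟨ha, hb, hcon.1, hcon.2⟩
        rcases hratio with hr | hr
        · have h2 : z a * Real.sqrt d ≤ z b := by
            have h3 : z a ≤ (Real.sqrt d)⁻¹ * z b := by
              rw [div_le_iff₀ hb] at hr
              linarith [hr]
            have h4 : z a * Real.sqrt d ≤ ((Real.sqrt d)⁻¹ * z b) * Real.sqrt d :=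
              mul_le_mul_of_nonneg_right h3 hd0.le
            have h5 : ((Real.sqrt d)⁻¹ * z b) * Real.sqrt d = z b := by
              field_simp
            linarith
          nlinarith [h2, hb.le, ha.le, sq_nonneg (z a)]
        · have h2 : Real.sqrt d * z b ≤ z a := (le_div_iff₀ hb).mp hr
          nlinarith [h2, ha.le, hb.le, sq_nonneg (z b)]
      have habs : |z a * A a b * z b| = z a * |A a b| * z b := by
        rw [abs_mul, abs_mul, abs_of_nonneg (hz a), abs_of_nonneg (hz b)]
      have hle1 : z a * |A a b| * z b ≤ z a * B a b * z b := by
        apply mul_le_mul_of_nonneg_right _ (hz b)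
        exact mul_le_mul_of_nonneg_left (hAB a b) (hz a)
      have hle2 : z a * B a b * z b ≤ B a b * (z a ^ 2 + z b ^ 2) / Real.sqrt d := by
        rw [le_div_iff₀ hd0]
        nlinarith [key, hB, mul_le_mul_of_nonneg_left key hB]
      linarith [habs.le, hle1, hle2, habs.ge]
  refine step1.trans ?_
  have heq : ∑ a, ∑ b, B a b * (z a ^ 2 + z b ^ 2) / Real.sqrt d
      = (∑ a, ∑ b, B a b * (z a ^ 2 + z b ^ 2)) / Real.sqrt d := by
    simp only [Finset.sum_div]
  rw [heq]
  have hw := sum_B_weight_le d B hrow hcol z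
  have hfinal : (4 * (d:ℝ) * ∑ a, z a ^ 2) / Real.sqrt d
      = 4 * Real.sqrt d * ∑ a, z a ^ 2 := by
    rw [div_eq_iff hd0.ne']
    linear_combination (-(4:ℝ) * ∑ a, z a ^ 2) * hdd
  rw [← hfinal]
  exact (div_le_div_iff_of_pos_right hd0).mpr hw

end Aux3

noncomputable section Aux4

open Finset

lemma Dplus_nonneg {n h : ℕ} {w : ℝ} (hw : w ∈ Dplus n h) : 0 ≤ w := by
  rcases Set.mem_insert_iff.mp hw with h0 | ⟨i, _, hi⟩
  · rw [h0]
  · rw [hi]; positivity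

lemma memZ_zero (d h n : ℕ) : memZ d h n (0 : Fin h × Fin n → ℝ) := by
  refine ⟨by simp, fun v => Set.mem_insert _ _, fun u v hv => absurd rfl hv⟩

lemma sum_ite_unique_le {v : ℝ} (hv : 0 ≤ v) (s : Finset ℕ) (c : ℕ → Prop)
    [DecidablePred c] (j : ℕ) (hc : ∀ k, c k → k = j) :
    (∑ k ∈ s, if c k then v else 0) ≤ v := by
  calc (∑ k ∈ s, if c k then v else 0) ≤ ∑ k ∈ s, if k = j then v else 0 := by
        refine Finset.sum_le_sum fun k _ => ?_
        by_cases hck : c k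
        · rw [if_pos hck, if_pos (hc k hck)]
        · rw [if_neg hck]
          by_cases hkj : k = j <;> simp [hkj, hv]
    _ = if j ∈ s then v else 0 := Finset.sum_ite_eq' s j fun _ => v
    _ ≤ v := by by_cases hj : j ∈ s <;> simp [hj, hv]

lemma sum_ite_unique_eq (v : ℝ) (s : Finset ℕ) (c : ℕ → Prop)
    [DecidablePred c] (j : ℕ) (hj : j ∈ s) (hc : ∀ k, c k ↔ k = j) :
    (∑ k ∈ s, if c k then v else 0) = v := by
  have : (∑ k ∈ s, if c k then v else 0) = ∑ k ∈ s, if k = j then v else 0 := by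
    refine Finset.sum_congr rfl fun k _ => ?_
    exact if_congr (hc k) rfl rfl
  rw [this, Finset.sum_ite_eq' s j fun _ => v, if_pos hj]

lemma quadFormOn_scaled_le (d h n : ℕ)
    (A : Matrix (Fin h × Fin n) (Fin h × Fin n) ℝ)
    (S : ℝ) (hS : ∀ x, memZ d h n x → |quadFormOn A (Estar d) x| ≤ S)
    (y : Fin h × Fin n → ℝ) (hDp : ∀ a, y a ∈ Dplus n h)
    (hwin : ∀ u v, y v ≠ 0 → y u ≤ (d : ℝ) * y v)
    (hnorm : (∑ a, y a ^ 2) ≤ 10) :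
    |quadFormOn A (Estar d) y| ≤ 2/5 * (∑ a, y a ^ 2) * S := by
  classical
  have hS0 : 0 ≤ S := le_trans (abs_nonneg _) (hS 0 (memZ_zero d h n))
  have hs0 : 0 ≤ ∑ a, y a ^ 2 := by positivity
  rcases eq_or_lt_of_le hs0 with hs | hs
  · have hz : ∀ a, y a = 0 := by
      intro a
      by_contra ha
      have h1 : 0 < y a ^ 2 := by positivity
      have h2 : y a ^ 2 ≤ ∑ b, y b ^ 2 := Finset.single_le_sum (f := fun b => y b ^ 2)
        (fun b _ => sq_nonneg (y b)) (Finset.mem_univ a)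
      nlinarith
    have hQ : quadFormOn A (Estar d) y = 0 := by
      simp only [quadFormOn]
      refine Finset.sum_eq_zero fun a _ => Finset.sum_eq_zero fun b _ => ?_
      simp [hz a, hz b]
    rw [hQ, ← hs]
    simp
  · obtain ⟨k0, hk0⟩ := pow_unbounded_of_one_lt (10 / (∑ a, y a ^ 2))
      (by norm_num : (1:ℝ) < 4)
    have hex : ∃ k : ℕ, 10 < 4 ^ (k + 1) * ∑ a, y a ^ 2 := by
      refine ⟨k0, ?_⟩
      have h2 : (4:ℝ) ^ k0 ≤ 4 ^ (k0 + 1) :=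
        pow_le_pow_right₀ (by norm_num) (Nat.le_succ k0)
      have h3 := (div_lt_iff₀ hs).mp hk0
      nlinarith
    set j := Nat.find hex with hjdef
    have hPj : 10 < 4 ^ (j + 1) * ∑ a, y a ^ 2 := Nat.find_spec hex
    have hprev : 4 ^ j * ∑ a, y a ^ 2 ≤ 10 := by
      rcases Nat.eq_zero_or_pos j with hj0 | hj0
      · rw [hj0]; simpa using hnorm
      · have hmin := Nat.find_min hex (show j - 1 < j from Nat.sub_lt hj0 Nat.one_pos)
        have hj1 : j - 1 + 1 = j := Nat.succ_pred_eq_of_pos hj0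
        rw [hj1] at hmin
        linarith [not_lt.mp hmin]
    have h4 : ((2:ℝ) ^ j) ^ 2 = 4 ^ j := by
      rw [← pow_mul, mul_comm, pow_mul]; norm_num
    have hnorm' : (∑ a, ((2:ℝ) ^ j * y a) ^ 2) = 4 ^ j * ∑ a, y a ^ 2 := by
      rw [Finset.mul_sum]
      refine Finset.sum_congr rfl fun a _ => ?_
      rw [mul_pow, h4]
    have hmemZ : memZ d h n (fun a => (2:ℝ) ^ j * y a) := by
      refine ⟨?_, ?_, ?_⟩
      · show (∑ v, ((2:ℝ) ^ j * y v) ^ 2) ≤ 10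
        rw [hnorm']; exact hprev
      · intro a
        show (2:ℝ) ^ j * y a ∈ Dplus n h
        rcases Set.mem_insert_iff.mp (hDp a) with h0 | ⟨i, hi1, hi2⟩
        · rw [h0, mul_zero]; exact Set.mem_insert _ _
        · refine Set.mem_insert_iff.mpr (Or.inr ⟨j + i, by omega, ?_⟩)
          rw [hi2, pow_add]; ring
      · intro u v hv
        have hv' : (2:ℝ) ^ j * y v ≠ 0 := hv
        show (2:ℝ) ^ j * y u ≤ (d:ℝ) * ((2:ℝ) ^ j * y v)
        have hyv : y v ≠ 0 := by
          intro hz0; apply hv'; rw [hz0, mul_zero]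
        have hw := hwin u v hyv
        have h2p : (0:ℝ) < 2 ^ j := by positivity
        calc (2:ℝ) ^ j * y u ≤ 2 ^ j * ((d : ℝ) * y v) := by nlinarith
          _ = (d : ℝ) * (2 ^ j * y v) := by ring
    have hscale : quadFormOn A (Estar d) (fun a => (2:ℝ) ^ j * y a)
        = 4 ^ j * quadFormOn A (Estar d) y := by
      simp only [quadFormOn, Finset.mul_sum]
      refine Finset.sum_congr rfl fun a _ => ?_
      refine Finset.sum_congr rfl fun b _ => ?_
      have hmem := Estar_smul_iff d (show (0:ℝ) < 2 ^ j by positivity) (y a) (y b)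
      rw [if_congr hmem rfl rfl]
      by_cases hm : (y a, y b) ∈ Estar d
      · rw [if_pos hm, if_pos hm]
        linear_combination (y a * A a b * y b) * h4
      · rw [if_neg hm, if_neg hm, mul_zero]
    have hfin : 4 ^ j * |quadFormOn A (Estar d) y| ≤ S := by
      have hx := hS _ hmemZ
      rw [hscale, abs_mul, abs_of_nonneg (by positivity : (0:ℝ) ≤ (4:ℝ) ^ j)] at hx
      exact hx
    have hps : (4:ℝ) ^ (j + 1) = 4 * 4 ^ j := by rw [pow_succ]; ring
    have h1 : (1:ℝ) ≤ 2/5 * (∑ a, y a ^ 2) * 4 ^ j := by nlinarith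
    calc |quadFormOn A (Estar d) y| = 1 * |quadFormOn A (Estar d) y| := (one_mul _).symm
      _ ≤ (2/5 * (∑ a, y a ^ 2) * 4 ^ j) * |quadFormOn A (Estar d) y| :=
          mul_le_mul_of_nonneg_right h1 (abs_nonneg _)
      _ = 2/5 * (∑ a, y a ^ 2) * (4 ^ j * |quadFormOn A (Estar d) y|) := by ring
      _ ≤ 2/5 * (∑ a, y a ^ 2) * S := by
          refine mul_le_mul_of_nonneg_left hfin (by positivity)

end Aux4

noncomputable section Aux5

open Finset

lemma quadFormOn_window_le (d h n : ℕ) (hd : 2 ≤ d) (hnh : 0 < n * h)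
    (A : Matrix (Fin h × Fin n) (Fin h × Fin n) ℝ)
    (S : ℝ) (hS : ∀ x, memZ d h n x → |quadFormOn A (Estar d) x| ≤ S)
    (y : Fin h × Fin n → ℝ) (hDp : ∀ a, y a ∈ Dplus n h)
    (hnorm : (∑ a, y a ^ 2) ≤ 8) :
    |quadFormOn A (Estar d) y| ≤ 48/5 * S := by
  classical
  have hS0 : 0 ≤ S := le_trans (abs_nonneg _) (hS 0 (memZ_zero d h n))
  have hnhR : (0:ℝ) < (n:ℝ) * (h:ℝ) := by
    have : (0:ℝ) < ((n * h : ℕ) : ℝ) := by exact_mod_cast hnh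
    push_cast at this; linarith
  have hsqp : (0:ℝ) < Real.sqrt ((n:ℝ) * (h:ℝ)) := Real.sqrt_pos.mpr hnhR
  have he : ∀ a, y a ≠ 0 → ∃ i : ℕ, 1 ≤ i ∧ y a = 2 ^ i / Real.sqrt ((n:ℝ) * (h:ℝ)) :=
    fun a ha => (Set.mem_insert_iff.mp (hDp a)).resolve_left ha
  set e : Fin h × Fin n → ℕ :=
    fun a => if ha : y a = 0 then 0 else (he a ha).choose with hedef
  have he1 : ∀ a, y a ≠ 0 → 1 ≤ e a := by
    intro a ha
    simp only [hedef, dif_neg ha]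
    exact ((he a ha).choose_spec).1
  have he2 : ∀ a, y a ≠ 0 → y a = 2 ^ (e a) / Real.sqrt ((n:ℝ) * (h:ℝ)) := by
    intro a ha
    simp only [hedef, dif_neg ha]
    exact ((he a ha).choose_spec).2
  have hypos : ∀ a, y a ≠ 0 → 0 < y a := by
    intro a ha; rw [he2 a ha]; positivity
  set m := max 1 (Nat.log 4 d) with hmdef
  have hm0 : 0 < m := le_max_left 1 _
  have hm2 : (2:ℕ) ^ (2 * m - 1) ≤ d := by
    by_cases hl : Nat.log 4 d ≤ 1
    · have hm1 : m = 1 := by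
        rw [hmdef]; exact max_eq_left hl
      rw [hm1]; simpa using hd
    · have hm1 : m = Nat.log 4 d := by
        rw [hmdef]; exact max_eq_right (by omega)
      have hp : 4 ^ (Nat.log 4 d) ≤ d := Nat.pow_log_le_self 4 (by omega)
      have h4m : (2:ℕ) ^ (2 * m) = 4 ^ m := by
        rw [pow_mul]; norm_num
      calc (2:ℕ) ^ (2 * m - 1) ≤ 2 ^ (2 * m) :=
            Nat.pow_le_pow_right (by norm_num) (by omega)
        _ = 4 ^ m := h4m
        _ ≤ d := by rw [hm1]; exact hp
  have hm3 : d < 4 ^ (m + 1) := by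
    have h1 := Nat.lt_pow_succ_log_self (by norm_num : 1 < 4) d
    have h2 : (4:ℕ) ^ (Nat.log 4 d + 1) ≤ 4 ^ (m + 1) :=
      Nat.pow_le_pow_right (by norm_num) (by
        have := le_max_right 1 (Nat.log 4 d); omega)
    omega
  have hm2R : (2:ℝ) ^ (2 * m - 1) ≤ (d:ℝ) := by exact_mod_cast hm2
  have hsdR : Real.sqrt d < (2:ℝ) ^ (m + 1) := by
    have h24 : ((2:ℝ) ^ (m + 1)) ^ 2 = 4 ^ (m + 1) := by
      rw [← pow_mul, mul_comm, pow_mul]; norm_num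
    refine (Real.sqrt_lt' (by positivity)).mpr ?_
    rw [h24]; exact_mod_cast hm3
  set K : Fin h × Fin n → ℕ := fun a => (e a - 1) / m with hKdef
  set R := (Finset.univ.sup K) + 1 with hRdef
  have hKR : ∀ a, K a < R := fun a => Nat.lt_succ_of_le (Finset.le_sup (Finset.mem_univ a))
  have hKbound : ∀ a, y a ≠ 0 → m * K a + 1 ≤ e a ∧ e a ≤ m * K a + m := by
    intro a ha
    have h1 : 1 ≤ e a := he1 a ha
    have h2 : m * K a + (e a - 1) % m = e a - 1 := Nat.div_add_mod (e a - 1) m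
    have h3 : (e a - 1) % m < m := Nat.mod_lt _ hm0
    generalize hP : m * K a = P at h2 ⊢
    generalize hrr : (e a - 1) % m = r at h2 h3
    omega
  -- block difference bound
  have hblock : ∀ a b, y a ≠ 0 → y b ≠ 0 → (y a, y b) ∈ Estar d →
      K a ≤ K b + 1 ∧ K b ≤ K a + 1 := by
    intro a b ha hb hE
    obtain ⟨h0a, h0b, h3, h4⟩ := hE
    have hsd0 : (0:ℝ) < Real.sqrt d := Real.sqrt_pos.mpr (by
      have : (2:ℝ) ≤ (d:ℝ) := by exact_mod_cast hd
      linarith)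
    have hrat : ∀ (p q : Fin h × Fin n), y p ≠ 0 → y q ≠ 0 →
        y p / y q = (2:ℝ) ^ (e p) / 2 ^ (e q) := by
      intro p q hp hq
      rw [he2 p hp, he2 q hq]
      exact div_div_div_cancel_right₀ hsqp.ne' _ _
    have hpowle : ∀ (i j : ℕ), j + m < i → ¬ ((2:ℝ) ^ i / 2 ^ j < Real.sqrt d) := by
      intro i j hij hcon
      have hge : (2:ℝ) ^ (m + 1) ≤ 2 ^ (i - j) :=
        pow_le_pow_right₀ one_le_two (by omega)
      have heq : (2:ℝ) ^ (i - j) = 2 ^ i / 2 ^ j := by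
        rw [eq_div_iff (by positivity), ← pow_add]
        congr 1
        omega
      rw [heq] at hge
      linarith
    have hab : e a ≤ e b + m := by
      by_contra hcon
      push_neg at hcon
      refine hpowle (e a) (e b) (by omega) ?_
      rw [← hrat a b ha hb]; exact h4
    have hba : e b ≤ e a + m := by
      have hinv : y b / y a < Real.sqrt d := by
        have h6 : (Real.sqrt d)⁻¹ * y b < y a := (lt_div_iff₀ h0b).mp h3
        have h7 := mul_lt_mul_of_pos_left h6 hsd0
        have h8 : Real.sqrt d * ((Real.sqrt d)⁻¹ * y b) = y b := by
          field_simp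
        rw [h8] at h7
        exact (div_lt_iff₀ h0a).mpr (by linarith)
      by_contra hcon
      push_neg at hcon
      refine hpowle (e b) (e a) (by omega) ?_
      rw [← hrat b a hb ha]; exact hinv
    have hea := he1 a ha
    have heb := he1 b hb
    constructor
    · have h1 : e a - 1 ≤ (e b - 1) + m := by omega
      calc K a = (e a - 1) / m := rfl
        _ ≤ ((e b - 1) + m) / m := Nat.div_le_div_right h1
        _ = K b + 1 := by rw [Nat.add_div_right _ hm0]
    · have h1 : e b - 1 ≤ (e a - 1) + m := by omega
      calc K b = (e b - 1) / m := rfl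
        _ ≤ ((e a - 1) + m) / m := Nat.div_le_div_right h1
        _ = K a + 1 := by rw [Nat.add_div_right _ hm0]
  clear_value e m K R
  -- the pieces
  set piece : ℕ → (Fin h × Fin n) → ℝ :=
    fun k a => if y a ≠ 0 ∧ K a = k then y a else 0 with hpiecedef
  set pairv : ℕ → (Fin h × Fin n) → ℝ :=
    fun k a => if y a ≠ 0 ∧ (K a = k ∨ K a = k + 1) then y a else 0 with hpairdef
  have hpieceD : ∀ k a, piece k a ∈ Dplus n h := by
    intro k a
    simp only [hpiecedef]
    split_ifs
    · exact hDp a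
    · exact Set.mem_insert _ _
  have hpairD : ∀ k a, pairv k a ∈ Dplus n h := by
    intro k a
    simp only [hpairdef]
    split_ifs
    · exact hDp a
    · exact Set.mem_insert _ _
  have hpiece_norm : ∀ k, (∑ a, piece k a ^ 2) ≤ ∑ a, y a ^ 2 := by
    intro k
    refine Finset.sum_le_sum fun a _ => ?_
    simp only [hpiecedef]
    split_ifs
    · exact le_rfl
    · simpa using sq_nonneg (y a)
  have hpair_norm : ∀ k, (∑ a, pairv k a ^ 2) ≤ ∑ a, y a ^ 2 := by
    intro k
    refine Finset.sum_le_sum fun a _ => ?_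
    simp only [hpairdef]
    split_ifs
    · exact le_rfl
    · simpa using sq_nonneg (y a)
  -- window condition : generic helper for a vector supported on exponents in [m*k+1, m*k+2m]
  have hwin_gen : ∀ (w : (Fin h × Fin n) → ℝ) (B : ℕ),
      (∀ a, w a = y a ∨ w a = 0) →
      (∀ a, w a ≠ 0 → y a ≠ 0 ∧ B + 1 ≤ e a ∧ e a ≤ B + 2 * m) →
      ∀ u v, w v ≠ 0 → w u ≤ (d:ℝ) * w v := by
    intro w B hw0 hsupp u v hv
    obtain ⟨hyv, hv1, hv2⟩ := hsupp v hv
    have hwv : w v = y v := (hw0 v).resolve_right hv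
    by_cases hu : w u = 0
    · rw [hu, hwv]
      exact mul_nonneg (Nat.cast_nonneg d) (hypos v hyv).le
    · obtain ⟨hyu, hu1, hu2⟩ := hsupp u hu
      have hwu : w u = y u := (hw0 u).resolve_right hu
      rw [hwu, hwv, he2 u hyu, he2 v hyv]
      have hexp : (2:ℝ) ^ (e u) ≤ (d:ℝ) * 2 ^ (e v) := by
        calc (2:ℝ) ^ (e u) ≤ 2 ^ (e v + (2 * m - 1)) :=
              pow_le_pow_right₀ one_le_two (by omega)
          _ = 2 ^ (e v) * 2 ^ (2 * m - 1) := by rw [pow_add]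
          _ ≤ 2 ^ (e v) * d := by
              refine mul_le_mul_of_nonneg_left hm2R (by positivity)
          _ = (d:ℝ) * 2 ^ (e v) := by ring
      calc (2:ℝ) ^ (e u) / Real.sqrt ((n:ℝ) * (h:ℝ))
            ≤ ((d:ℝ) * 2 ^ (e v)) / Real.sqrt ((n:ℝ) * (h:ℝ)) :=
            (div_le_div_iff_of_pos_right hsqp).mpr hexp
        _ = (d:ℝ) * (2 ^ (e v) / Real.sqrt ((n:ℝ) * (h:ℝ))) := by ring
  have hpiece_win : ∀ k u v, piece k v ≠ 0 → piece k u ≤ (d:ℝ) * piece k v := by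
    intro k
    refine hwin_gen (piece k) (m * k) ?_ ?_
    · intro a; simp only [hpiecedef]; split_ifs
      · exact Or.inl rfl
      · exact Or.inr rfl
    · intro a hne
      have hc : y a ≠ 0 ∧ K a = k := by
        by_contra hc; apply hne; simp only [hpiecedef, if_neg hc]
      obtain ⟨hb1, hb2⟩ := hKbound a hc.1
      rw [hc.2] at hb1 hb2
      exact ⟨hc.1, hb1, by linarith [Nat.zero_le m]⟩
  have hpair_win : ∀ k u v, pairv k v ≠ 0 → pairv k u ≤ (d:ℝ) * pairv k v := by
    intro k
    refine hwin_gen (pairv k) (m * k) ?_ ?_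
    · intro a; simp only [hpairdef]; split_ifs
      · exact Or.inl rfl
      · exact Or.inr rfl
    · intro a hne
      have hc : y a ≠ 0 ∧ (K a = k ∨ K a = k + 1) := by
        by_contra hc; apply hne; simp only [hpairdef, if_neg hc]
      obtain ⟨hb1, hb2⟩ := hKbound a hc.1
      have hmul : m * (k + 1) = m * k + m := Nat.mul_succ m k
      rcases hc.2 with h1 | h1 <;> rw [h1] at hb1 hb2
      · exact ⟨hc.1, hb1, by linarith [Nat.zero_le m]⟩
      · rw [hmul] at hb1 hb2
        exact ⟨hc.1, by linarith, by linarith⟩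
  -- scaled bounds for the pieces
  have hQpiece : ∀ k, |quadFormOn A (Estar d) (piece k)|
      ≤ 2/5 * (∑ a, piece k a ^ 2) * S := fun k =>
    quadFormOn_scaled_le d h n A S hS (piece k) (hpieceD k) (hpiece_win k)
      ((hpiece_norm k).trans (by linarith))
  have hQpair : ∀ k, |quadFormOn A (Estar d) (pairv k)|
      ≤ 2/5 * (∑ a, pairv k a ^ 2) * S := fun k =>
    quadFormOn_scaled_le d h n A S hS (pairv k) (hpairD k) (hpair_win k)
      ((hpair_norm k).trans (by linarith))
  -- rewrite the restricted quadratic forms of the pieces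
  have hpiece_eq : ∀ k, quadFormOn A (Estar d) (piece k)
      = ∑ a, ∑ b, (if (y a ≠ 0 ∧ K a = k) ∧ (y b ≠ 0 ∧ K b = k)
          then (if (y a, y b) ∈ Estar d then y a * A a b * y b else 0) else 0) := by
    intro k
    simp only [quadFormOn]
    refine Finset.sum_congr rfl fun a _ => Finset.sum_congr rfl fun b _ => ?_
    by_cases hca : y a ≠ 0 ∧ K a = k
    · by_cases hcb : y b ≠ 0 ∧ K b = k
      · have ha' : piece k a = y a := by simp only [hpiecedef]; exact if_pos hca
        have hb' : piece k b = y b := by simp only [hpiecedef]; exact if_pos hcb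
        have hcc : (y a ≠ 0 ∧ K a = k) ∧ (y b ≠ 0 ∧ K b = k) := ⟨hca, hcb⟩
        rw [ha', hb', if_pos hcc]
      · have hb' : piece k b = 0 := by simp only [hpiecedef]; exact if_neg hcb
        rw [hb', if_neg (Estar_not_right_zero d _), if_neg (fun hc => hcb hc.2)]
    · have ha' : piece k a = 0 := by simp only [hpiecedef]; exact if_neg hca
      rw [ha', if_neg (Estar_not_left_zero d _), if_neg (fun hc => hca hc.1)]
  have hpair_eq : ∀ k, quadFormOn A (Estar d) (pairv k)
      = ∑ a, ∑ b, (if (y a ≠ 0 ∧ (K a = k ∨ K a = k + 1)) ∧ (y b ≠ 0 ∧ (K b = k ∨ K b = k + 1))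
          then (if (y a, y b) ∈ Estar d then y a * A a b * y b else 0) else 0) := by
    intro k
    simp only [quadFormOn]
    refine Finset.sum_congr rfl fun a _ => Finset.sum_congr rfl fun b _ => ?_
    by_cases hca : y a ≠ 0 ∧ (K a = k ∨ K a = k + 1)
    · by_cases hcb : y b ≠ 0 ∧ (K b = k ∨ K b = k + 1)
      · have ha' : pairv k a = y a := by simp only [hpairdef]; exact if_pos hca
        have hb' : pairv k b = y b := by simp only [hpairdef]; exact if_pos hcb
        have hcc : (y a ≠ 0 ∧ (K a = k ∨ K a = k + 1)) ∧ (y b ≠ 0 ∧ (K b = k ∨ K b = k + 1)) := ⟨hca, hcb⟩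
        rw [ha', hb', if_pos hcc]
      · have hb' : pairv k b = 0 := by simp only [hpairdef]; exact if_neg hcb
        rw [hb', if_neg (Estar_not_right_zero d _), if_neg (fun hc => hcb hc.2)]
    · have ha' : pairv k a = 0 := by simp only [hpairdef]; exact if_neg hca
      rw [ha', if_neg (Estar_not_left_zero d _), if_neg (fun hc => hca hc.1)]
  -- pointwise partition identity
  have hper : ∀ a b, (∑ k ∈ Finset.range R,
      ((if (y a ≠ 0 ∧ (K a = k ∨ K a = k + 1)) ∧ (y b ≠ 0 ∧ (K b = k ∨ K b = k + 1))
          then (if (y a, y b) ∈ Estar d then y a * A a b * y b else 0) else 0)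
        - (if (y a ≠ 0 ∧ K a = k + 1) ∧ (y b ≠ 0 ∧ K b = k + 1)
          then (if (y a, y b) ∈ Estar d then y a * A a b * y b else 0) else 0)))
      = (if (y a, y b) ∈ Estar d then y a * A a b * y b else 0) := by
    intro a b
    by_cases hE : (y a, y b) ∈ Estar d
    · have ha : y a ≠ 0 := fun h0 => Estar_not_left_zero d (y b) (h0 ▸ hE)
      have hb : y b ≠ 0 := fun h0 => Estar_not_right_zero d (y a) (h0 ▸ hE)
      obtain ⟨hKab, hKba⟩ := hblock a b ha hb hE
      simp only [if_pos hE]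
      set v := y a * A a b * y b with hvdef
      have hmem : K a ∈ Finset.range R := Finset.mem_range.mpr (hKR a)
      have hmemb : K b ∈ Finset.range R := Finset.mem_range.mpr (hKR b)
      rcases Nat.lt_trichotomy (K a) (K b) with hlt | heqK | hgt
      · have hKb : K b = K a + 1 := by omega
        have hstep : ∀ k,
            ((if (y a ≠ 0 ∧ (K a = k ∨ K a = k + 1)) ∧ (y b ≠ 0 ∧ (K b = k ∨ K b = k + 1))
                then v else 0)
              - (if (y a ≠ 0 ∧ K a = k + 1) ∧ (y b ≠ 0 ∧ K b = k + 1) then v else 0))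
            = (if K a = k then v else 0) := by
          intro k
          have hneg : ¬ ((y a ≠ 0 ∧ K a = k + 1) ∧ (y b ≠ 0 ∧ K b = k + 1)) := by
            rintro ⟨⟨-, h1⟩, ⟨-, h2⟩⟩; omega
          rw [if_neg hneg, sub_zero]
          refine if_congr ?_ rfl rfl
          constructor
          · rintro ⟨⟨-, h1⟩, ⟨-, h2⟩⟩; omega
          · intro hk; exact ⟨⟨ha, by omega⟩, ⟨hb, by omega⟩⟩
        rw [Finset.sum_congr rfl fun k _ => hstep k]
        exact sum_ite_unique_eq v (Finset.range R) (fun k => K a = k) (K a) hmem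
          (fun k => eq_comm)
      · have hstep : ∀ k,
            ((if (y a ≠ 0 ∧ (K a = k ∨ K a = k + 1)) ∧ (y b ≠ 0 ∧ (K b = k ∨ K b = k + 1))
                then v else 0)
              - (if (y a ≠ 0 ∧ K a = k + 1) ∧ (y b ≠ 0 ∧ K b = k + 1) then v else 0))
            = (if k = K a then v else 0) := by
          intro k
          by_cases hk1 : K a = k
          · have hp1 : (y a ≠ 0 ∧ (K a = k ∨ K a = k + 1)) ∧ (y b ≠ 0 ∧ (K b = k ∨ K b = k + 1)) :=
              ⟨⟨ha, Or.inl hk1⟩, ⟨hb, by omega⟩⟩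
            have hn1 : ¬ ((y a ≠ 0 ∧ K a = k + 1) ∧ (y b ≠ 0 ∧ K b = k + 1)) := by
              rintro ⟨⟨-, h1⟩, -⟩; omega
            rw [if_pos hp1, if_neg hn1, if_pos hk1.symm, sub_zero]
          · by_cases hk2 : K a = k + 1
            · have hp1 : (y a ≠ 0 ∧ (K a = k ∨ K a = k + 1)) ∧ (y b ≠ 0 ∧ (K b = k ∨ K b = k + 1)) :=
                ⟨⟨ha, Or.inr hk2⟩, ⟨hb, by omega⟩⟩
              have hp2 : (y a ≠ 0 ∧ K a = k + 1) ∧ (y b ≠ 0 ∧ K b = k + 1) :=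
                ⟨⟨ha, hk2⟩, ⟨hb, by omega⟩⟩
              rw [if_pos hp1, if_pos hp2, if_neg (fun hk : k = K a => hk1 hk.symm)]
              ring
            · have hn1 : ¬ ((y a ≠ 0 ∧ (K a = k ∨ K a = k + 1)) ∧ (y b ≠ 0 ∧ (K b = k ∨ K b = k + 1))) := by
                rintro ⟨⟨-, h1⟩, -⟩; rcases h1 with h | h <;> omega
              have hn2 : ¬ ((y a ≠ 0 ∧ K a = k + 1) ∧ (y b ≠ 0 ∧ K b = k + 1)) := by
                rintro ⟨⟨-, h1⟩, -⟩; omega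
              rw [if_neg hn1, if_neg hn2, if_neg (fun hk : k = K a => hk1 hk.symm)]
              ring
        rw [Finset.sum_congr rfl fun k _ => hstep k]
        rw [Finset.sum_ite_eq' (Finset.range R) (K a) fun _ => v]
        exact if_pos hmem
      · have hKa : K a = K b + 1 := by omega
        have hstep : ∀ k,
            ((if (y a ≠ 0 ∧ (K a = k ∨ K a = k + 1)) ∧ (y b ≠ 0 ∧ (K b = k ∨ K b = k + 1))
                then v else 0)
              - (if (y a ≠ 0 ∧ K a = k + 1) ∧ (y b ≠ 0 ∧ K b = k + 1) then v else 0))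
            = (if K b = k then v else 0) := by
          intro k
          have hneg : ¬ ((y a ≠ 0 ∧ K a = k + 1) ∧ (y b ≠ 0 ∧ K b = k + 1)) := by
            rintro ⟨⟨-, h1⟩, ⟨-, h2⟩⟩; omega
          rw [if_neg hneg, sub_zero]
          refine if_congr ?_ rfl rfl
          constructor
          · rintro ⟨⟨-, h1⟩, ⟨-, h2⟩⟩; omega
          · intro hk; exact ⟨⟨ha, by omega⟩, ⟨hb, by omega⟩⟩
        rw [Finset.sum_congr rfl fun k _ => hstep k]
        exact sum_ite_unique_eq v (Finset.range R) (fun k => K b = k) (K b) hmemb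
          (fun k => eq_comm)
    · simp [hE]
  -- decomposition of the full restricted form
  have hdecomp : quadFormOn A (Estar d) y
      = ∑ k ∈ Finset.range R,
        (quadFormOn A (Estar d) (pairv k) - quadFormOn A (Estar d) (piece (k + 1))) := by
    have h1 : ∀ k ∈ Finset.range R,
        quadFormOn A (Estar d) (pairv k) - quadFormOn A (Estar d) (piece (k + 1))
        = ∑ a, ∑ b,
          ((if (y a ≠ 0 ∧ (K a = k ∨ K a = k + 1)) ∧ (y b ≠ 0 ∧ (K b = k ∨ K b = k + 1))
              then (if (y a, y b) ∈ Estar d then y a * A a b * y b else 0) else 0)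
            - (if (y a ≠ 0 ∧ K a = k + 1) ∧ (y b ≠ 0 ∧ K b = k + 1)
              then (if (y a, y b) ∈ Estar d then y a * A a b * y b else 0) else 0)) := by
      intro k _
      rw [hpair_eq k, hpiece_eq (k + 1), ← Finset.sum_sub_distrib]
      exact Finset.sum_congr rfl fun a _ => (Finset.sum_sub_distrib _ _).symm
    calc quadFormOn A (Estar d) y
        = ∑ a, ∑ b, (if (y a, y b) ∈ Estar d then y a * A a b * y b else 0) := rfl
      _ = ∑ a, ∑ b, ∑ k ∈ Finset.range R,
          ((if (y a ≠ 0 ∧ (K a = k ∨ K a = k + 1)) ∧ (y b ≠ 0 ∧ (K b = k ∨ K b = k + 1))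
              then (if (y a, y b) ∈ Estar d then y a * A a b * y b else 0) else 0)
            - (if (y a ≠ 0 ∧ K a = k + 1) ∧ (y b ≠ 0 ∧ K b = k + 1)
              then (if (y a, y b) ∈ Estar d then y a * A a b * y b else 0) else 0)) := by
          refine Finset.sum_congr rfl fun a _ => Finset.sum_congr rfl fun b _ => (hper a b).symm
      _ = ∑ a, ∑ k ∈ Finset.range R, ∑ b,
          ((if (y a ≠ 0 ∧ (K a = k ∨ K a = k + 1)) ∧ (y b ≠ 0 ∧ (K b = k ∨ K b = k + 1))
              then (if (y a, y b) ∈ Estar d then y a * A a b * y b else 0) else 0)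
            - (if (y a ≠ 0 ∧ K a = k + 1) ∧ (y b ≠ 0 ∧ K b = k + 1)
              then (if (y a, y b) ∈ Estar d then y a * A a b * y b else 0) else 0)) := by
          exact Finset.sum_congr rfl fun a _ => Finset.sum_comm
      _ = ∑ k ∈ Finset.range R, ∑ a, ∑ b,
          ((if (y a ≠ 0 ∧ (K a = k ∨ K a = k + 1)) ∧ (y b ≠ 0 ∧ (K b = k ∨ K b = k + 1))
              then (if (y a, y b) ∈ Estar d then y a * A a b * y b else 0) else 0)
            - (if (y a ≠ 0 ∧ K a = k + 1) ∧ (y b ≠ 0 ∧ K b = k + 1)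
              then (if (y a, y b) ∈ Estar d then y a * A a b * y b else 0) else 0)) :=
          Finset.sum_comm
      _ = ∑ k ∈ Finset.range R,
          (quadFormOn A (Estar d) (pairv k) - quadFormOn A (Estar d) (piece (k + 1))) :=
          (Finset.sum_congr rfl h1).symm
  -- norm sums over windows
  have hite_nonneg : ∀ (c : Prop) (w : ℝ) (hw : 0 ≤ w), (0:ℝ) ≤ if c then w else 0 := by
    intro c w hw
    split_ifs
    · exact hw
    · exact le_rfl
  have hsum_pair : ∑ k ∈ Finset.range R, ∑ a, pairv k a ^ 2 ≤ 2 * ∑ a, y a ^ 2 := by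
    rw [Finset.sum_comm]
    calc ∑ a, ∑ k ∈ Finset.range R, pairv k a ^ 2
        ≤ ∑ a, (y a ^ 2 + y a ^ 2) := by
          refine Finset.sum_le_sum fun a _ => ?_
          have hsq : ∀ k, (pairv k a) ^ 2
              = (if y a ≠ 0 ∧ (K a = k ∨ K a = k + 1) then y a ^ 2 else 0) := by
            intro k; simp only [hpairdef]; split_ifs <;> simp
          rw [Finset.sum_congr rfl fun k _ => hsq k]
          calc ∑ k ∈ Finset.range R, (if y a ≠ 0 ∧ (K a = k ∨ K a = k + 1) then y a ^ 2 else 0)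
              ≤ ∑ k ∈ Finset.range R,
                ((if K a = k then y a ^ 2 else 0) + (if K a = k + 1 then y a ^ 2 else 0)) := by
                refine Finset.sum_le_sum fun k _ => ?_
                split_ifs with h1 h2 h3 h2 h3 h3
                all_goals first
                  | linarith [sq_nonneg (y a)]
                  | (exfalso; rcases h1.2 with h | h <;> tauto)
            _ = (∑ k ∈ Finset.range R, (if K a = k then y a ^ 2 else 0))
                + ∑ k ∈ Finset.range R, (if K a = k + 1 then y a ^ 2 else 0) :=
                Finset.sum_add_distrib
            _ ≤ y a ^ 2 + y a ^ 2 := by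
                refine add_le_add ?_ ?_
                · exact sum_ite_unique_le (sq_nonneg _) _ _ (K a) fun k hk => hk.symm
                · exact sum_ite_unique_le (sq_nonneg _) _ _ (K a - 1) fun k hk => by omega
      _ = 2 * ∑ a, y a ^ 2 := by
          rw [Finset.sum_add_distrib]; ring
  have hsum_piece : ∑ k ∈ Finset.range R, ∑ a, piece (k + 1) a ^ 2 ≤ ∑ a, y a ^ 2 := by
    rw [Finset.sum_comm]
    refine Finset.sum_le_sum fun a _ => ?_
    have hsq : ∀ k, (piece (k + 1) a) ^ 2
        = (if y a ≠ 0 ∧ K a = k + 1 then y a ^ 2 else 0) := by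
      intro k; simp only [hpiecedef]; split_ifs <;> simp
    rw [Finset.sum_congr rfl fun k _ => hsq k]
    exact sum_ite_unique_le (sq_nonneg _) _ _ (K a - 1) fun k hk => by
      have := hk.2; omega
  -- assemble
  rw [hdecomp]
  have habs : ∀ (x1 x2 : ℝ), |x1 - x2| ≤ |x1| + |x2| := fun x1 x2 => by
    calc |x1 - x2| = |x1 + -x2| := by ring_nf
      _ ≤ |x1| + |-x2| := abs_add_le _ _
      _ = |x1| + |x2| := by rw [abs_neg]
  calc |∑ k ∈ Finset.range R,
        (quadFormOn A (Estar d) (pairv k) - quadFormOn A (Estar d) (piece (k + 1)))|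
      ≤ ∑ k ∈ Finset.range R,
        |quadFormOn A (Estar d) (pairv k) - quadFormOn A (Estar d) (piece (k + 1))| :=
        Finset.abs_sum_le_sum_abs _ _
    _ ≤ ∑ k ∈ Finset.range R,
        (2/5 * (∑ a, pairv k a ^ 2) * S + 2/5 * (∑ a, piece (k + 1) a ^ 2) * S) := by
        refine Finset.sum_le_sum fun k _ => ?_
        calc |quadFormOn A (Estar d) (pairv k) - quadFormOn A (Estar d) (piece (k + 1))|
            ≤ |quadFormOn A (Estar d) (pairv k)| + |quadFormOn A (Estar d) (piece (k + 1))| :=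
              habs _ _
          _ ≤ 2/5 * (∑ a, pairv k a ^ 2) * S + 2/5 * (∑ a, piece (k + 1) a ^ 2) * S :=
              add_le_add (hQpair k) (hQpiece (k + 1))
    _ = 2/5 * S * (∑ k ∈ Finset.range R, ∑ a, pairv k a ^ 2)
        + 2/5 * S * (∑ k ∈ Finset.range R, ∑ a, piece (k + 1) a ^ 2) := by
        rw [Finset.sum_add_distrib, Finset.mul_sum, Finset.mul_sum]
        congr 1
        · exact Finset.sum_congr rfl fun k _ => by ring
        · exact Finset.sum_congr rfl fun k _ => by ring
    _ ≤ 48/5 * S := by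
        have h1 : ∑ k ∈ Finset.range R, ∑ a, pairv k a ^ 2 ≤ 16 := by linarith
        have h2 : ∑ k ∈ Finset.range R, ∑ a, piece (k + 1) a ^ 2 ≤ 8 := by linarith
        have h3 := mul_le_mul_of_nonneg_left h1 (show (0:ℝ) ≤ 2/5 * S by positivity)
        have h4 := mul_le_mul_of_nonneg_left h2 (show (0:ℝ) ≤ 2/5 * S by positivity)
        linarith

end Aux5

noncomputable section Aux6

open Finset

lemma exists_dyadic_bounds (h n : ℕ) (hnh : 0 < n * h) (z : Fin h × Fin n → ℝ)
    (hz : ∀ a, 0 ≤ z a) :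
    ∃ lo hi : Fin h × Fin n → ℝ,
      (∀ a, lo a ∈ Dplus n h) ∧ (∀ a, hi a ∈ Dplus n h) ∧
      (∀ a, lo a ≤ z a) ∧ (∀ a, z a ≤ hi a) ∧
      (∀ a, hi a ^ 2 ≤ 4 * z a ^ 2 + 4 / ((n : ℝ) * (h : ℝ))) := by
  classical
  have hnhR : (0:ℝ) < (n:ℝ) * (h:ℝ) := by
    have : (0:ℝ) < ((n * h : ℕ) : ℝ) := by exact_mod_cast hnh
    push_cast at this; linarith
  have hsqp : (0:ℝ) < Real.sqrt ((n:ℝ) * (h:ℝ)) := Real.sqrt_pos.mpr hnhR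
  have hex : ∀ a, ∃ i : ℕ, z a ≤ 2 ^ (i + 1) / Real.sqrt ((n:ℝ) * (h:ℝ)) := by
    intro a
    obtain ⟨i, hi⟩ := pow_unbounded_of_one_lt
      (z a * Real.sqrt ((n:ℝ) * (h:ℝ))) (one_lt_two)
    refine ⟨i, ?_⟩
    rw [le_div_iff₀ hsqp]
    calc z a * Real.sqrt ((n:ℝ) * (h:ℝ)) ≤ 2 ^ i := hi.le
      _ ≤ 2 ^ (i + 1) := pow_le_pow_right₀ one_le_two (Nat.le_succ i)
  set f : Fin h × Fin n → ℕ := fun a => Nat.find (hex a) with hfdef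
  have hf : ∀ a, z a ≤ 2 ^ (f a + 1) / Real.sqrt ((n:ℝ) * (h:ℝ)) :=
    fun a => Nat.find_spec (hex a)
  have hfmin : ∀ a, f a ≠ 0 →
      2 ^ (f a) / Real.sqrt ((n:ℝ) * (h:ℝ)) < z a := by
    intro a ha
    have h1 := Nat.find_min (hex a) (show f a - 1 < f a by omega)
    rw [show f a - 1 + 1 = f a by omega] at h1
    exact not_le.mp h1
  refine ⟨fun a => if z a = 0 then 0 else
      (if f a = 0 then 0 else 2 ^ (f a) / Real.sqrt ((n:ℝ) * (h:ℝ))),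
    fun a => if z a = 0 then 0 else 2 ^ (f a + 1) / Real.sqrt ((n:ℝ) * (h:ℝ)),
    ?_, ?_, ?_, ?_, ?_⟩
  · intro a
    show (if z a = 0 then 0 else (if f a = 0 then 0 else 2 ^ (f a) / Real.sqrt ((n:ℝ) * (h:ℝ)))) ∈ Dplus n h
    split_ifs with h1 h2
    · exact Set.mem_insert _ _
    · exact Set.mem_insert _ _
    · exact Set.mem_insert_iff.mpr (Or.inr ⟨f a, by omega, rfl⟩)
  · intro a
    show (if z a = 0 then 0 else 2 ^ (f a + 1) / Real.sqrt ((n:ℝ) * (h:ℝ))) ∈ Dplus n h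
    split_ifs with h1
    · exact Set.mem_insert _ _
    · exact Set.mem_insert_iff.mpr (Or.inr ⟨f a + 1, by omega, rfl⟩)
  · intro a
    show (if z a = 0 then 0 else (if f a = 0 then 0 else 2 ^ (f a) / Real.sqrt ((n:ℝ) * (h:ℝ)))) ≤ z a
    split_ifs with h1 h2
    · exact le_of_eq h1.symm
    · exact hz a
    · exact (hfmin a h2).le
  · intro a
    show z a ≤ (if z a = 0 then 0 else 2 ^ (f a + 1) / Real.sqrt ((n:ℝ) * (h:ℝ)))
    split_ifs with h1
    · exact le_of_eq h1
    · exact hf a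
  · intro a
    show (if z a = 0 then 0 else 2 ^ (f a + 1) / Real.sqrt ((n:ℝ) * (h:ℝ))) ^ 2 ≤ 4 * z a ^ 2 + 4 / ((n : ℝ) * (h : ℝ))
    split_ifs with h1
    · have : (0:ℝ) ^ 2 = 0 := by norm_num
      rw [this]
      positivity
    · by_cases h2 : f a = 0
      · rw [h2]
        have hq : ((2:ℝ) ^ (0 + 1) / Real.sqrt ((n:ℝ) * (h:ℝ))) ^ 2
            = 4 / ((n:ℝ) * (h:ℝ)) := by
          rw [div_pow, Real.sq_sqrt hnhR.le]
          norm_num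
        rw [hq]
        nlinarith [sq_nonneg (z a)]
      · have hlt := hfmin a h2
        have hpos : (0:ℝ) ≤ 2 ^ (f a) / Real.sqrt ((n:ℝ) * (h:ℝ)) := by positivity
        have hhi : (2:ℝ) ^ (f a + 1) / Real.sqrt ((n:ℝ) * (h:ℝ))
            = 2 * (2 ^ (f a) / Real.sqrt ((n:ℝ) * (h:ℝ))) := by
          rw [pow_succ]; ring
        rw [hhi]
        have hx2 : (2 ^ f a / Real.sqrt ((n:ℝ) * (h:ℝ))) ^ 2 ≤ z a ^ 2 :=
          pow_le_pow_left₀ hpos hlt.le 2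
        have h4 : (0:ℝ) ≤ 4 / ((n:ℝ) * (h:ℝ)) := by positivity
        nlinarith [hx2, h4]

lemma abs_quadForm_le_of_nonneg (d h n : ℕ) (hd : 2 ≤ d) (hnh : 0 < n * h)
    (A B : Matrix (Fin h × Fin n) (Fin h × Fin n) ℝ)
    (hdiag : ∀ a, A a a = 0)
    (hAB : ∀ a b, |A a b| ≤ B a b)
    (hrow : ∀ a, ∑ b, B a b ≤ 2 * d) (hcol : ∀ b, ∑ a, B a b ≤ 2 * d)
    (S : ℝ) (hS : ∀ x, memZ d h n x → |quadFormOn A (Estar d) x| ≤ S)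
    (w : Fin h × Fin n → ℝ) (hw : ∀ a, 0 ≤ w a) (hw2 : (∑ a, w a ^ 2) ≤ 1) :
    |quadForm A w| ≤ 48/5 * S + 32 * Real.sqrt d := by
  classical
  have hnhR : (0:ℝ) < (n:ℝ) * (h:ℝ) := by
    have : (0:ℝ) < ((n * h : ℕ) : ℝ) := by exact_mod_cast hnh
    push_cast at this; linarith
  have hdyadic : ∀ y : Fin h × Fin n → ℝ, (∀ a, y a ∈ Dplus n h) →
      (∑ a, y a ^ 2) ≤ 8 → |quadForm A y| ≤ 48/5 * S + 32 * Real.sqrt d := by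
    intro y hyD hy8
    have hy0 : ∀ a, 0 ≤ y a := fun a => Dplus_nonneg (hyD a)
    have h1 := abs_quadForm_sub_quadFormOn d (by omega) A B hAB hrow hcol y hy0
    have h2 := quadFormOn_window_le d h n hd hnh A S hS y hyD hy8
    have hsd : (0:ℝ) ≤ Real.sqrt d := Real.sqrt_nonneg _
    have h3 : 4 * Real.sqrt d * (∑ a, y a ^ 2) ≤ 32 * Real.sqrt d := by nlinarith
    calc |quadForm A y|
        = |(quadForm A y - quadFormOn A (Estar d) y) + quadFormOn A (Estar d) y| := by
          ring_nf
      _ ≤ |quadForm A y - quadFormOn A (Estar d) y| + |quadFormOn A (Estar d) y| :=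
          abs_add_le _ _
      _ ≤ 48/5 * S + 32 * Real.sqrt d := by linarith
  obtain ⟨lo, hi, hloD, hhiD, hloz, hzhi, hhi2⟩ := exists_dyadic_bounds h n hnh w hw
  have hicard : (∑ _a : Fin h × Fin n, (4 / ((n:ℝ) * (h:ℝ)))) = 4 := by
    have hn0 : (n:ℝ) ≠ 0 := Nat.cast_ne_zero.mpr (by rintro rfl; simp at hnh)
    have hh0 : (h:ℝ) ≠ 0 := Nat.cast_ne_zero.mpr (by rintro rfl; simp at hnh)
    rw [Finset.sum_const, Finset.card_univ, Fintype.card_prod, Fintype.card_fin,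
      Fintype.card_fin, nsmul_eq_mul]
    push_cast
    field_simp
  have hnorm8 : ∀ y : Fin h × Fin n → ℝ,
      (∀ a, y a = lo a ∨ y a = hi a) → (∑ a, y a ^ 2) ≤ 8 := by
    intro y hy
    calc (∑ a, y a ^ 2) ≤ ∑ a, (4 * w a ^ 2 + 4 / ((n:ℝ) * (h:ℝ))) := by
          refine Finset.sum_le_sum fun a _ => ?_
          have hya : 0 ≤ y a := by
            rcases hy a with hh | hh
            · rw [hh]; exact Dplus_nonneg (hloD a)
            · rw [hh]; exact Dplus_nonneg (hhiD a)
          have hyhi : y a ≤ hi a := by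
            rcases hy a with hh | hh
            · rw [hh]; exact (hloz a).trans (hzhi a)
            · rw [hh]
          calc y a ^ 2 ≤ hi a ^ 2 := pow_le_pow_left₀ hya hyhi 2
            _ ≤ 4 * w a ^ 2 + 4 / ((n:ℝ) * (h:ℝ)) := hhi2 a
      _ = 4 * (∑ a, w a ^ 2) + 4 := by
          rw [Finset.sum_add_distrib, ← Finset.mul_sum, hicard]
      _ ≤ 8 := by linarith
  obtain ⟨yU, hyU1, hyU2⟩ := exists_endpoint_ge A hdiag lo hi w hloz hzhi
  obtain ⟨yL, hyL1, hyL2⟩ :=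
    exists_endpoint_ge (-A) (fun a => by simp [hdiag a]) lo hi w hloz hzhi
  have hyUD : ∀ a, yU a ∈ Dplus n h := fun a =>
    (hyU1 a).elim (fun hh => hh ▸ hloD a) (fun hh => hh ▸ hhiD a)
  have hyLD : ∀ a, yL a ∈ Dplus n h := fun a =>
    (hyL1 a).elim (fun hh => hh ▸ hloD a) (fun hh => hh ▸ hhiD a)
  have hU := hdyadic yU hyUD (hnorm8 yU hyU1)
  have hL := hdyadic yL hyLD (hnorm8 yL hyL1)
  have hQU : quadForm A w ≤ quadForm A yU := hyU2
  have hQL : quadForm A yL ≤ quadForm A w := by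
    have h5 := hyL2
    rw [quadForm_neg, quadForm_neg] at h5
    linarith
  rw [abs_le]
  constructor
  · have := neg_abs_le (quadForm A yL)
    linarith
  · have := le_abs_self (quadForm A yU)
    linarith

end Aux6

noncomputable section Aux7

open Finset

variable {d h n : ℕ}

lemma adjMat_diag_zero {V : Type*} (G : SimpleGraph V) (a : V) : adjMat G a a = 0 := by
  simp [adjMat, G.loopless.irrefl a]

lemma adjMat_nonneg {V : Type*} (G : SimpleGraph V) (a b : V) : 0 ≤ adjMat G a b := by
  simp only [adjMat]; split_ifs <;> norm_num

lemma adjMat_symm {V : Type*} (G : SimpleGraph V) (a b : V) :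
    adjMat G a b = adjMat G b a := by
  simp only [adjMat]
  rw [SimpleGraph.adj_comm]

lemma Mbar_nonneg (H : SimpleGraph (Fin h)) (a b : Fin h × Fin n) :
    0 ≤ Mbar h n H a b := by
  simp only [Mbar]; split_ifs <;> positivity

lemma Mbar_symm (H : SimpleGraph (Fin h)) (a b : Fin h × Fin n) :
    Mbar h n H a b = Mbar h n H b a := by
  simp only [Mbar]
  rw [SimpleGraph.adj_comm]

lemma Mbar_diag_zero (H : SimpleGraph (Fin h)) (a : Fin h × Fin n) :
    Mbar h n H a a = 0 := by
  simp [Mbar, H.loopless.irrefl a.1]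

lemma liftGraph_rowsum (H : SimpleGraph (Fin h)) [DecidableRel H.Adj]
    (hreg : H.IsRegularOfDegree d) (ω : LiftSpace h n) (a : Fin h × Fin n) :
    ∑ b, adjMat (liftGraph H ω) a b ≤ (d : ℝ) := by
  classical
  obtain ⟨i, j⟩ := a
  rw [Fintype.sum_prod_type]
  have hinner : ∀ i' : Fin h,
      (∑ j' : Fin n, adjMat (liftGraph H ω) (i, j) (i', j'))
        ≤ (if H.Adj i i' then (1:ℝ) else 0) := by
    intro i'
    by_cases hadj : H.Adj i i'
    · rw [if_pos hadj]
      have hne : i ≠ i' := hadj.ne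
      rcases lt_or_gt_of_ne hne with hlt | hgt
      · calc (∑ j' : Fin n, adjMat (liftGraph H ω) (i, j) (i', j'))
            ≤ ∑ j' : Fin n, (if j' = ω i i' j then (1:ℝ) else 0) := by
              refine Finset.sum_le_sum fun j' _ => ?_
              simp only [adjMat]
              split_ifs with hA hj hj
              · exact le_rfl
              · exfalso
                rcases hA.2 with ⟨-, hj'⟩ | ⟨hlt', -⟩
                · exact hj hj'
                · exact absurd hlt (asymm hlt')
              · norm_num
              · exact le_rfl
          _ = 1 := by
              rw [Finset.sum_ite_eq' Finset.univ (ω i i' j) fun _ => (1:ℝ)]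
              exact if_pos (Finset.mem_univ _)
      · calc (∑ j' : Fin n, adjMat (liftGraph H ω) (i, j) (i', j'))
            ≤ ∑ j' : Fin n, (if j' = (ω i' i).symm j then (1:ℝ) else 0) := by
              refine Finset.sum_le_sum fun j' _ => ?_
              simp only [adjMat]
              split_ifs with hA hj hj
              · exact le_rfl
              · exfalso
                rcases hA.2 with ⟨hlt', -⟩ | ⟨-, hj'⟩
                · exact absurd hlt' (asymm hgt)
                · exact hj ((Equiv.symm_apply_eq (ω i' i)).mpr hj').symm
              · norm_num
              · exact le_rfl
          _ = 1 := by
              rw [Finset.sum_ite_eq' Finset.univ ((ω i' i).symm j) fun _ => (1:ℝ)]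
              exact if_pos (Finset.mem_univ _)
    · rw [if_neg hadj]
      refine le_of_eq (Finset.sum_eq_zero fun j' _ => ?_)
      simp only [adjMat]
      exact if_neg fun hA => hadj hA.1
  calc (∑ i' : Fin h, ∑ j' : Fin n, adjMat (liftGraph H ω) (i, j) (i', j'))
      ≤ ∑ i' : Fin h, (if H.Adj i i' then (1:ℝ) else 0) :=
        Finset.sum_le_sum fun i' _ => hinner i'
    _ = ((Finset.univ.filter (H.Adj i)).card : ℝ) := by
        rw [Finset.sum_boole]
    _ = (d : ℝ) := by
        rw [← SimpleGraph.neighborFinset_eq_filter]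
        have := hreg i
        rw [SimpleGraph.degree] at this
        rw [this]

lemma Mbar_rowsum (H : SimpleGraph (Fin h)) [DecidableRel H.Adj] (hn : 1 ≤ n)
    (hreg : H.IsRegularOfDegree d) (a : Fin h × Fin n) :
    ∑ b, Mbar h n H a b ≤ (d : ℝ) := by
  classical
  obtain ⟨i, j⟩ := a
  rw [Fintype.sum_prod_type]
  have hn0 : (n:ℝ) ≠ 0 := Nat.cast_ne_zero.mpr (by omega)
  have hinner : ∀ i' : Fin h,
      (∑ _j' : Fin n, Mbar h n H (i, j) (i', (_j' : Fin n)))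
        = (if H.Adj i i' then (1:ℝ) else 0) := by
    intro i'
    simp only [Mbar]
    by_cases hadj : H.Adj i i'
    · simp only [if_pos hadj, Finset.sum_const, Finset.card_univ, Fintype.card_fin,
        nsmul_eq_mul]
      field_simp
    · simp [hadj]
  rw [Finset.sum_congr rfl fun i' _ => hinner i']
  calc (∑ i' : Fin h, if H.Adj i i' then (1:ℝ) else 0)
      = ((Finset.univ.filter (H.Adj i)).card : ℝ) := by rw [Finset.sum_boole]
    _ = (d : ℝ) := by
        rw [← SimpleGraph.neighborFinset_eq_filter]
        have := hreg i
        rw [SimpleGraph.degree] at this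
        rw [this]
    _ ≤ (d : ℝ) := le_rfl

end Aux7

theorem statement7 (d h n : ℕ) (hd : 2 ≤ d) (hn : 1 ≤ n) (H : SimpleGraph (Fin h))
    [DecidableRel H.Adj] (hreg : H.IsRegularOfDegree d) (ω : LiftSpace h n) :
    lambdaStar (liftGraph H ω) ≤
      96 * sSup {r : ℝ | ∃ x : Fin h × Fin n → ℝ, memZ d h n x ∧
          r = |quadFormOn (Nmat H (liftGraph H ω)) (Estar d) x|} +
        480 * Real.sqrt d := by
  classical
  set A := Nmat H (liftGraph H ω) with hAdef
  set B : Matrix (Fin h × Fin n) (Fin h × Fin n) ℝ :=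
    fun a b => adjMat (liftGraph H ω) a b + Mbar h n H a b with hBdef
  have hd1 : 1 ≤ d := by omega
  -- entrywise bound and row/column sums
  have hAentry : ∀ a b, A a b = adjMat (liftGraph H ω) a b - Mbar h n H a b := by
    intro a b
    rw [hAdef]
    simp only [Nmat, Matrix.sub_apply]
  have hAB : ∀ a b, |A a b| ≤ B a b := by
    intro a b
    rw [hAentry a b, hBdef]
    have h1 := adjMat_nonneg (liftGraph H ω) a b
    have h2 := Mbar_nonneg (H := H) (n := n) a b
    rw [abs_sub_comm]
    rw [abs_le]
    constructor <;> simp only <;> nlinarith [abs_nonneg (adjMat (liftGraph H ω) a b)]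
  have hBsymm : ∀ a b, B a b = B b a := by
    intro a b
    rw [hBdef]
    simp only
    rw [adjMat_symm, Mbar_symm]
  have hrow : ∀ a, ∑ b, B a b ≤ 2 * d := by
    intro a
    rw [hBdef]
    simp only
    rw [Finset.sum_add_distrib]
    have h1 := liftGraph_rowsum H hreg ω a
    have h2 := Mbar_rowsum H hn hreg a
    push_cast
    linarith
  have hcol : ∀ b, ∑ a, B a b ≤ 2 * d := by
    intro b
    have : (∑ a, B a b) = ∑ a, B b a := Finset.sum_congr rfl fun a _ => hBsymm a b
    rw [this]
    exact hrow b
  have hdiag : ∀ a, A a a = 0 := by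
    intro a
    rw [hAentry a a, adjMat_diag_zero, Mbar_diag_zero, sub_zero]
  -- the supremum S
  set S := sSup {r : ℝ | ∃ x : Fin h × Fin n → ℝ, memZ d h n x ∧
      r = |quadFormOn A (Estar d) x|} with hSdef
  have hbdd : BddAbove {r : ℝ | ∃ x : Fin h × Fin n → ℝ, memZ d h n x ∧
      r = |quadFormOn A (Estar d) x|} := by
    refine ⟨2 * d * 10, ?_⟩
    rintro r ⟨x, hx, rfl⟩
    calc |quadFormOn A (Estar d) x| ≤ 2 * d * ∑ a, x a ^ 2 :=
          abs_quadFormOn_le d A B hAB hrow hcol x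
      _ ≤ 2 * d * 10 := by
          have := hx.1
          have hd0 : (0:ℝ) ≤ 2 * (d:ℝ) := by positivity
          nlinarith
  have hS : ∀ x, memZ d h n x → |quadFormOn A (Estar d) x| ≤ S := by
    intro x hx
    rw [hSdef]
    exact le_csSup hbdd ⟨x, hx, rfl⟩
  have hS0 : 0 ≤ S := le_trans (abs_nonneg _) (hS 0 (memZ_zero d h n))
  have hsd0 : (0:ℝ) ≤ Real.sqrt d := Real.sqrt_nonneg _
  have hrhs0 : (0:ℝ) ≤ 96 * S + 480 * Real.sqrt d := by linarith
  rw [lambdaStar]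
  refine Real.sSup_le ?_ hrhs0
  rintro r ⟨μ, x, hx0, heig, hbal, rfl⟩
  -- basic positivity
  obtain ⟨a0, ha0⟩ := Function.ne_iff.mp hx0
  have hnh : 0 < n * h := Nat.mul_pos (by omega) a0.1.pos
  have hs0 : 0 < ∑ a, x a ^ 2 := by
    have h1 : 0 < x a0 ^ 2 := pow_two_pos_of_ne_zero ha0
    have h2 : x a0 ^ 2 ≤ ∑ a, x a ^ 2 :=
      Finset.single_le_sum (f := fun a => x a ^ 2) (fun a _ => sq_nonneg _)
        (Finset.mem_univ a0)
    linarith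
  -- quadratic form identities
  have hQM : quadForm (adjMat (liftGraph H ω)) x = μ * ∑ a, x a ^ 2 := by
    have hrowvec : ∀ a, ∑ b, adjMat (liftGraph H ω) a b * x b = μ * x a := by
      intro a
      have hcf := congrFun heig a
      simpa [Matrix.mulVec, dotProduct, Pi.smul_apply, smul_eq_mul] using hcf
    simp only [quadForm]
    have hstep : ∀ a, (∑ b, x a * adjMat (liftGraph H ω) a b * x b)
        = x a * (μ * x a) := by
      intro a
      calc (∑ b, x a * adjMat (liftGraph H ω) a b * x b)
          = x a * ∑ b, adjMat (liftGraph H ω) a b * x b := by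
            rw [Finset.mul_sum]
            exact Finset.sum_congr rfl fun b _ => by ring
        _ = x a * (μ * x a) := by rw [hrowvec a]
    rw [Finset.sum_congr rfl fun a _ => hstep a, Finset.mul_sum]
    exact Finset.sum_congr rfl fun a _ => by ring
  have hQMbar : quadForm (Mbar h n H) x = 0 := by
    simp only [quadForm]
    rw [Fintype.sum_prod_type]
    refine Finset.sum_eq_zero fun i _ => Finset.sum_eq_zero fun j _ => ?_
    rw [Fintype.sum_prod_type]
    refine Finset.sum_eq_zero fun i' _ => ?_
    have hstep : (∑ j' : Fin n, x (i, j) * Mbar h n H (i, j) (i', j') * x (i', j'))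
        = (x (i, j) * (if H.Adj i i' then 1 / (n:ℝ) else 0)) * ∑ j' : Fin n, x (i', j') := by
      rw [Finset.mul_sum]
      refine Finset.sum_congr rfl fun j' _ => ?_
      simp only [Mbar]
      ring
    rw [hstep, hbal i', mul_zero]
  have hQA : quadForm A x = μ * ∑ a, x a ^ 2 := by
    rw [hAdef]
    simp only [Nmat]
    rw [quadForm_sub_matrix, hQM, hQMbar]
    ring
  -- normalize
  set c := (Real.sqrt (∑ a, x a ^ 2))⁻¹ with hcdef
  have hc2 : c ^ 2 = (∑ a, x a ^ 2)⁻¹ := by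
    rw [hcdef, inv_pow, Real.sq_sqrt hs0.le]
  set z := fun a => c * x a with hzdef
  have hz2 : (∑ a, z a ^ 2) = 1 := by
    simp only [hzdef, mul_pow]
    rw [← Finset.mul_sum, hc2]
    exact inv_mul_cancel₀ hs0.ne'
  have hQz : quadForm A z = μ := by
    calc quadForm A z = c ^ 2 * quadForm A x := quadForm_smul A c x
      _ = μ := by
          rw [hQA, hc2]
          field_simp
  -- positive and negative part
  set u := fun a => max (z a) 0 with hudef
  set v := fun a => max (-z a) 0 with hvdef
  have hzuv : z = fun a => u a - v a := by
    funext a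
    simp only [hudef, hvdef]
    rcases le_total 0 (z a) with hza | hza
    · rw [max_eq_left hza, max_eq_right (neg_nonpos.mpr hza), sub_zero]
    · rw [max_eq_right hza, max_eq_left (neg_nonneg.mpr hza)]
      ring
  have hu0 : ∀ a, 0 ≤ u a := fun a => le_max_right _ _
  have hv0 : ∀ a, 0 ≤ v a := fun a => le_max_right _ _
  have huv0 : ∀ a, 0 ≤ u a + v a := fun a => add_nonneg (hu0 a) (hv0 a)
  have hu2 : (∑ a, u a ^ 2) ≤ 1 := by
    rw [← hz2]
    refine Finset.sum_le_sum fun a _ => ?_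
    simp only [hudef]
    rcases le_total 0 (z a) with hza | hza
    · rw [max_eq_left hza]
    · rw [max_eq_right hza]
      simpa using sq_nonneg (z a)
  have hv2 : (∑ a, v a ^ 2) ≤ 1 := by
    rw [← hz2]
    refine Finset.sum_le_sum fun a _ => ?_
    simp only [hvdef]
    rcases le_total 0 (z a) with hza | hza
    · rw [max_eq_right (neg_nonpos.mpr hza)]
      simpa using sq_nonneg (z a)
    · rw [max_eq_left (neg_nonneg.mpr hza)]
      simpa using le_rfl
  have huv2 : (∑ a, (u a + v a) ^ 2) ≤ 1 := by
    rw [← hz2]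
    refine Finset.sum_le_sum fun a _ => ?_
    simp only [hudef, hvdef]
    rcases le_total 0 (z a) with hza | hza
    · rw [max_eq_left hza, max_eq_right (neg_nonpos.mpr hza), add_zero]
    · rw [max_eq_right hza, max_eq_left (neg_nonneg.mpr hza), zero_add]
      simpa using le_rfl
  -- the three quadratic form bounds
  have hkeyU := abs_quadForm_le_of_nonneg d h n hd hnh A B hdiag hAB hrow hcol S hS
    u hu0 hu2
  have hkeyV := abs_quadForm_le_of_nonneg d h n hd hnh A B hdiag hAB hrow hcol S hS
    v hv0 hv2
  have hkeyUV := abs_quadForm_le_of_nonneg d h n hd hnh A B hdiag hAB hrow hcol S hS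
    (fun a => u a + v a) huv0 huv2
  -- parallelogram
  have hpar := quadForm_parallelogram A u v
  have hQz2 : quadForm A (fun a => u a - v a) = μ := by rw [← hzuv]; exact hQz
  have hμeq : μ = 2 * quadForm A u + 2 * quadForm A v
      - quadForm A (fun a => u a + v a) := by linarith
  have habs1 := abs_le.mp hkeyU
  have habs2 := abs_le.mp hkeyV
  have habs3 := abs_le.mp hkeyUV
  rw [abs_le]
  constructor
  · rw [hμeq]; linarith
  · rw [hμeq]; linarith


end RandomLifts
end
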